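/- arXiv:2006.06946 — 6 statements merged into one kernel-verified Lean document; each statement's English description precedes it below -/
import Mathlib

section
/- For every η with 0 ≤ η ≤ 1/(2 n L), the expectation over a uniformly random permutation σ of t(σ) satisfies ‖E_σ[t(σ)]‖ ≤ 4 η n L G. -/
open scoped RealInnerProductSpace

/-- `t(σ) = ∑_{j=1}^n (I − ηA_{σ(n)})(I − ηA_{σ(n−1)})···(I − ηA_{σ(j+1)}) b_{σ(j)}`
(indices `0`-based; the empty product is the identity). -/
noncomputable def tvec (d n : ℕ) (η : ℝ)
    (A : Fin n → EuclideanSpace ℝ (Fin d) →L[ℝ] EuclideanSpace ℝ (Fin d))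
    (b : Fin n → EuclideanSpace ℝ (Fin d)) (σ : Equiv.Perm (Fin n)) :
    EuclideanSpace ℝ (Fin d) :=
  ∑ j : Fin n,
    ((List.ofFn (fun s : Fin (n - 1 - (j : ℕ)) =>
        (1 : EuclideanSpace ℝ (Fin d) →L[ℝ] EuclideanSpace ℝ (Fin d)) -
          η • A (σ ⟨n - 1 - (s : ℕ), by have hs := s.isLt; omega⟩))).prod)
      (b (σ j))


section Aux

variable {R : Type*} [NormedRing R]

lemma myPow_le (x : ℝ) (hx : 0 ≤ x) : ∀ (K : ℕ), 2 * K * x ≤ 1 → (1 + x) ^ K ≤ 1 + 2 * K * x := by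
  intro K
  induction K with
  | zero => simp
  | succ K ih =>
    intro h
    have hK : 2 * (K : ℝ) * x ≤ 1 := by
      have : (K : ℝ) ≤ (K + 1 : ℕ) := by push_cast; linarith
      nlinarith [Nat.cast_nonneg (α := ℝ) K]
    have ih' := ih hK
    have h1x : (0:ℝ) ≤ 1 + x := by linarith
    calc (1 + x) ^ (K + 1) = (1 + x) ^ K * (1 + x) := by ring
      _ ≤ (1 + 2 * K * x) * (1 + x) := by
          apply mul_le_mul_of_nonneg_right ih' h1x
      _ ≤ 1 + 2 * (K + 1 : ℕ) * x := by push_cast; nlinarith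
  
lemma myProdNorm (h1 : ‖(1:R)‖ ≤ 1) (c : ℝ) (hc : 1 ≤ c) :
    ∀ (l : List R), (∀ x ∈ l, ‖x‖ ≤ c) → ‖l.prod‖ ≤ c ^ l.length := by
  intro l
  induction l with
  | nil => intro _; simpa using h1
  | cons a t ih =>
    intro h
    rw [List.prod_cons, List.length_cons, pow_succ]
    calc ‖a * t.prod‖ ≤ ‖a‖ * ‖t.prod‖ := norm_mul_le _ _
      _ ≤ c * c ^ t.length := by
          apply mul_le_mul (h a (by simp)) (ih fun x hx => h x (by simp [hx]))
            (norm_nonneg _) (by linarith)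
      _ = c ^ t.length * c := by ring

lemma myProdDiff (h1 : ‖(1:R)‖ ≤ 1) (c ε : ℝ) (hc : 1 ≤ c) (hε : 0 ≤ ε) :
    ∀ (K : ℕ) (f g : Fin K → R), (∀ s, ‖f s‖ ≤ c) → (∀ s, ‖g s‖ ≤ c) →
      (∀ s, f s = g s ∨ (‖f s - g s‖ ≤ ε ∧ ∀ s', s' ≠ s → f s' = g s')) →
      ‖(List.ofFn f).prod - (List.ofFn g).prod‖ ≤ c ^ K * ε := by
  intro K
  induction K with
  | zero => intro f g _ _ _; simpa using hε
  | succ K ih =>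
    intro f g hf hg hd
    have hc0 : (0:ℝ) ≤ c := by linarith
    have hcK : (0:ℝ) ≤ c ^ K := pow_nonneg hc0 K
    rw [List.ofFn_succ, List.ofFn_succ, List.prod_cons, List.prod_cons]
    set Pf := (List.ofFn fun i : Fin K => f i.succ).prod with hPf
    set Pg := (List.ofFn fun i : Fin K => g i.succ).prod with hPg
    have hPfn : ‖Pf‖ ≤ c ^ K := by
      rw [hPf]
      have := myProdNorm h1 c hc (List.ofFn fun i : Fin K => f i.succ)
        (by intro x hx; rcases List.mem_ofFn.1 hx with ⟨i, rfl⟩; exact hf _)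
      simpa using this
    by_cases h0 : f 0 = g 0
    · have heq : f 0 * Pf - g 0 * Pg = f 0 * (Pf - Pg) := by rw [h0, mul_sub]
      rw [heq]
      have htail : ‖Pf - Pg‖ ≤ c ^ K * ε := by
        apply ih _ _ (fun s => hf s.succ) (fun s => hg s.succ)
        intro s
        rcases hd s.succ with h | ⟨hb, ho⟩
        · exact Or.inl h
        · exact Or.inr ⟨hb, fun s' hs' => ho s'.succ (fun hcon => hs' (Fin.succ_injective _ hcon))⟩
      calc ‖f 0 * (Pf - Pg)‖ ≤ ‖f 0‖ * ‖Pf - Pg‖ := norm_mul_le _ _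
        _ ≤ c * (c ^ K * ε) := mul_le_mul (hf 0) htail (norm_nonneg _) hc0
        _ = c ^ (K + 1) * ε := by ring
    · rcases hd 0 with h | ⟨hb, ho⟩
      · exact absurd h h0
      · have htail : (fun i : Fin K => f i.succ) = (fun i : Fin K => g i.succ) :=
          funext fun i => ho i.succ (Fin.succ_ne_zero i)
        have hPP : Pf = Pg := by rw [hPf, hPg, htail]
        rw [hPP, ← sub_mul]
        calc ‖(f 0 - g 0) * Pg‖ ≤ ‖f 0 - g 0‖ * ‖Pg‖ := norm_mul_le _ _
          _ ≤ ε * c ^ K := mul_le_mul hb (hPP ▸ hPfn) (norm_nonneg _) hε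
          _ ≤ c ^ (K + 1) * ε := by
              have : c ^ K ≤ c ^ (K + 1) := pow_le_pow_right₀ hc (Nat.le_succ K)
              nlinarith

end Aux


section Aux2

variable (d n : ℕ) (η L : ℝ)
  (A : Fin n → EuclideanSpace ℝ (Fin d) →L[ℝ] EuclideanSpace ℝ (Fin d))

/-- position used by the `s`-th factor of the `j`-th product. -/
def qpos' (n : ℕ) (j : Fin n) (s : Fin (n - 1 - (j : ℕ))) : Fin n :=
  ⟨n - 1 - (s : ℕ), by have hs := s.isLt; have hj := j.isLt; omega⟩

noncomputable def Fop (σ : Equiv.Perm (Fin n)) (j : Fin n) :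
    EuclideanSpace ℝ (Fin d) →L[ℝ] EuclideanSpace ℝ (Fin d) :=
  (List.ofFn (fun s : Fin (n - 1 - (j : ℕ)) =>
      (1 : EuclideanSpace ℝ (Fin d) →L[ℝ] EuclideanSpace ℝ (Fin d)) -
        η • A (σ (qpos' n j s)))).prod


lemma Fop_swap_diff (hη0 : 0 ≤ η) (hL : 0 ≤ L) (hAL : ∀ i, ‖A i‖ ≤ L)
    (c : ℝ) (hc1 : 1 ≤ c)
    (hfac : ∀ i, ‖(1 : EuclideanSpace ℝ (Fin d) →L[ℝ] EuclideanSpace ℝ (Fin d)) - η • A i‖ ≤ c)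
    (σ : Equiv.Perm (Fin n)) (j p : Fin n) :
    ‖Fop d n η A (σ * Equiv.swap j p) j - Fop d n η A σ j‖
      ≤ c ^ (n - 1 - (j : ℕ)) * (2 * η * L) := by
  have h1le : ‖(1 : EuclideanSpace ℝ (Fin d) →L[ℝ] EuclideanSpace ℝ (Fin d))‖ ≤ 1 := by
    rw [ContinuousLinearMap.one_def]; exact ContinuousLinearMap.norm_id_le
  have hqj : ∀ s : Fin (n - 1 - (j : ℕ)), qpos' n j s ≠ j := by
    intro s h
    have hs := s.isLt
    have := congrArg Fin.val h
    simp only [qpos'] at this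
    omega
  have hd : ∀ s : Fin (n - 1 - (j : ℕ)),
      ((1 : EuclideanSpace ℝ (Fin d) →L[ℝ] EuclideanSpace ℝ (Fin d)) -
          η • A ((σ * Equiv.swap j p) (qpos' n j s)))
        = (1 - η • A (σ (qpos' n j s))) ∨
      (‖((1 : EuclideanSpace ℝ (Fin d) →L[ℝ] EuclideanSpace ℝ (Fin d)) -
            η • A ((σ * Equiv.swap j p) (qpos' n j s)))
          - (1 - η • A (σ (qpos' n j s)))‖ ≤ 2 * η * L ∧
        ∀ s', s' ≠ s →
          ((1 : EuclideanSpace ℝ (Fin d) →L[ℝ] EuclideanSpace ℝ (Fin d)) -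
              η • A ((σ * Equiv.swap j p) (qpos' n j s')))
            = (1 - η • A (σ (qpos' n j s')))) := by
    intro s
    by_cases hqp : qpos' n j s = p
    · right
      constructor
      · have h1' : (σ * Equiv.swap j p) (qpos' n j s) = σ j := by
          rw [Equiv.Perm.mul_apply, hqp, Equiv.swap_apply_right]
        have heq : ((1 : EuclideanSpace ℝ (Fin d) →L[ℝ] EuclideanSpace ℝ (Fin d)) -
              η • A (σ j)) - (1 - η • A (σ (qpos' n j s)))
            = η • (A (σ (qpos' n j s)) - A (σ j)) := by
          rw [smul_sub]; abel
        rw [h1', heq]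
        have hns := norm_smul η (A (σ (qpos' n j s)) - A (σ j))
        rw [hns, Real.norm_eq_abs, abs_of_nonneg hη0]
        calc η * ‖A (σ (qpos' n j s)) - A (σ j)‖ ≤ η * (L + L) := by
              apply mul_le_mul_of_nonneg_left _ hη0
              exact le_trans (norm_sub_le _ _) (add_le_add (hAL _) (hAL _))
          _ = 2 * η * L := by ring
      · intro s' hs'
        have hne2 : qpos' n j s' ≠ p := by
          rw [← hqp]
          intro h
          have := congrArg Fin.val h
          simp only [qpos'] at this
          have h1 := s.isLt; have h2 := s'.isLt
          exact hs' (Fin.ext (by omega))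
        rw [Equiv.Perm.mul_apply, Equiv.swap_apply_of_ne_of_ne (hqj s') hne2]
    · left
      rw [Equiv.Perm.mul_apply, Equiv.swap_apply_of_ne_of_ne (hqj s) hqp]
  have key := myProdDiff h1le c (2 * η * L) hc1 (by positivity) (n - 1 - (j : ℕ))
    (fun s => (1 : EuclideanSpace ℝ (Fin d) →L[ℝ] EuclideanSpace ℝ (Fin d)) -
        η • A ((σ * Equiv.swap j p) (qpos' n j s)))
    (fun s => 1 - η • A (σ (qpos' n j s)))
    (fun s => hfac _) (fun s => hfac _) hd
  exact key

end Aux2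
section Main

variable (d n : ℕ) (η L G : ℝ)
  (A : Fin n → EuclideanSpace ℝ (Fin d) →L[ℝ] EuclideanSpace ℝ (Fin d))
  (b : Fin n → EuclideanSpace ℝ (Fin d))

lemma Sj_bound (hn : 2 ≤ n) (hη0 : 0 ≤ η) (hL : 0 ≤ L) (hAL : ∀ i, ‖A i‖ ≤ L)
    (hG : 0 ≤ G) (hbG : ∀ i, ‖b i‖ ≤ G) (hbsum : ∑ i, b i = 0)
    (hop : ∀ (σ : Equiv.Perm (Fin n)) (j p : Fin n),
      ‖Fop d n η A (σ * Equiv.swap j p) j - Fop d n η A σ j‖ ≤ 4 * η * L)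
    (j : Fin n) :
    ‖∑ σ : Equiv.Perm (Fin n), Fop d n η A σ j (b (σ j))‖
      ≤ (Fintype.card (Equiv.Perm (Fin n)) : ℝ) * (4 * η * L * G) := by
  set N := Fintype.card (Equiv.Perm (Fin n)) with hN
  set S := ∑ σ : Equiv.Perm (Fin n), Fop d n η A σ j (b (σ j)) with hS
  have hn0 : (0:ℝ) < n := by exact_mod_cast (by omega : 0 < n)
  have hswap : ∀ p : Fin n,
      S = ∑ σ : Equiv.Perm (Fin n), Fop d n η A (σ * Equiv.swap j p) j (b (σ p)) := by
    intro p
    have h := Equiv.sum_comp (Equiv.mulRight (Equiv.swap j p))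
      (fun σ => Fop d n η A σ j (b (σ j)))
    simp only [Equiv.coe_mulRight] at h
    rw [hS, ← h]
    apply Finset.sum_congr rfl
    intro σ _
    congr 2
    rw [Equiv.Perm.mul_apply, Equiv.swap_apply_left]
  have hzero : ∀ σ : Equiv.Perm (Fin n), ∑ p : Fin n, Fop d n η A σ j (b (σ p)) = 0 := by
    intro σ
    rw [← map_sum]
    have h : ∑ p : Fin n, b (σ p) = 0 := by rw [Equiv.sum_comp σ b]; exact hbsum
    rw [h, map_zero]
  have hmain : (n : ℝ) • S = ∑ σ : Equiv.Perm (Fin n), ∑ p : Fin n,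
      (Fop d n η A (σ * Equiv.swap j p) j - Fop d n η A σ j) (b (σ p)) := by
    have h1 : ∑ _p : Fin n, S = (n : ℝ) • S := by
      rw [Finset.sum_const, Finset.card_univ, Fintype.card_fin, ← Nat.cast_smul_eq_nsmul ℝ]
    rw [← h1]
    calc ∑ p : Fin n, S
        = ∑ p : Fin n, ∑ σ : Equiv.Perm (Fin n),
            Fop d n η A (σ * Equiv.swap j p) j (b (σ p)) :=
          Finset.sum_congr rfl (fun p _ => hswap p)
      _ = ∑ σ : Equiv.Perm (Fin n), ∑ p : Fin n,
            Fop d n η A (σ * Equiv.swap j p) j (b (σ p)) := Finset.sum_comm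
      _ = ∑ σ : Equiv.Perm (Fin n), ∑ p : Fin n,
            (Fop d n η A (σ * Equiv.swap j p) j (b (σ p)) - Fop d n η A σ j (b (σ p))) := by
          apply Finset.sum_congr rfl
          intro σ _
          rw [Finset.sum_sub_distrib, hzero σ, sub_zero]
      _ = ∑ σ : Equiv.Perm (Fin n), ∑ p : Fin n,
            (Fop d n η A (σ * Equiv.swap j p) j - Fop d n η A σ j) (b (σ p)) := by
          apply Finset.sum_congr rfl
          intro σ _
          apply Finset.sum_congr rfl
          intro p _
          rw [ContinuousLinearMap.sub_apply]
  have hterm : ∀ (σ : Equiv.Perm (Fin n)) (p : Fin n),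
      ‖(Fop d n η A (σ * Equiv.swap j p) j - Fop d n η A σ j) (b (σ p))‖
        ≤ 4 * η * L * G := by
    intro σ p
    calc ‖(Fop d n η A (σ * Equiv.swap j p) j - Fop d n η A σ j) (b (σ p))‖
        ≤ ‖Fop d n η A (σ * Equiv.swap j p) j - Fop d n η A σ j‖ * ‖b (σ p)‖ :=
          ContinuousLinearMap.le_opNorm _ _
      _ ≤ (4 * η * L) * G :=
          mul_le_mul (hop σ j p) (hbG _) (norm_nonneg _) (by positivity)
      _ = 4 * η * L * G := by ring
  have hnormS : (n : ℝ) * ‖S‖ ≤ (N : ℝ) * ((n : ℝ) * (4 * η * L * G)) := by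
    have h2 : ‖(n : ℝ) • S‖ = (n : ℝ) * ‖S‖ := by
      rw [norm_smul, Real.norm_eq_abs, abs_of_nonneg hn0.le]
    calc (n : ℝ) * ‖S‖ = ‖(n : ℝ) • S‖ := h2.symm
      _ = ‖∑ σ : Equiv.Perm (Fin n), ∑ p : Fin n,
            (Fop d n η A (σ * Equiv.swap j p) j - Fop d n η A σ j) (b (σ p))‖ := by rw [hmain]
      _ ≤ ∑ σ : Equiv.Perm (Fin n), ∑ p : Fin n,
            ‖(Fop d n η A (σ * Equiv.swap j p) j - Fop d n η A σ j) (b (σ p))‖ :=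
          le_trans (norm_sum_le _ _) (Finset.sum_le_sum fun σ _ => norm_sum_le _ _)
      _ ≤ ∑ _σ : Equiv.Perm (Fin n), ∑ _p : Fin n, (4 * η * L * G) :=
          Finset.sum_le_sum fun σ _ => Finset.sum_le_sum fun p _ => hterm σ p
      _ = (N : ℝ) * ((n : ℝ) * (4 * η * L * G)) := by
          rw [Finset.sum_const, Finset.sum_const, Finset.card_univ, Finset.card_univ,
            Fintype.card_fin, nsmul_eq_mul, nsmul_eq_mul, hN]
  have := (mul_le_mul_iff_right₀ hn0).mp (by linarith [hnormS] : (n:ℝ) * ‖S‖ ≤ (n:ℝ) * ((N:ℝ) * (4*η*L*G)))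
  exact this

end Main

/-- For `0 ≤ η ≤ 1/(2nL)`, the expectation of `t(σ)` over a uniformly random
permutation satisfies `‖E_σ[t(σ)]‖ ≤ 4ηnLG`. -/
theorem tvec_expectation_bound (d n : ℕ) (hd : 1 ≤ d) (hn : 2 ≤ n) (μ L G : ℝ)
    (hμ : 0 < μ) (hμL : μ ≤ L)
    (A : Fin n → EuclideanSpace ℝ (Fin d) →L[ℝ] EuclideanSpace ℝ (Fin d))
    (hsymm : ∀ i x y, ⟪A i x, y⟫ = ⟪x, A i y⟫)
    (hAL : ∀ i, ‖A i‖ ≤ L)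
    (hμI : ∀ x : EuclideanSpace ℝ (Fin d),
      μ * ‖x‖ ^ 2 ≤ ⟪x, ((n : ℝ)⁻¹ • ∑ i, A i) x⟫)
    (b : Fin n → EuclideanSpace ℝ (Fin d))
    (hbsum : ∑ i, b i = 0) (hbG : ∀ i, ‖b i‖ ≤ G)
    (η : ℝ) (hη0 : 0 ≤ η) (hη : η ≤ 1 / (2 * n * L)) :
    ‖(Fintype.card (Equiv.Perm (Fin n)) : ℝ)⁻¹ •
        ∑ σ : Equiv.Perm (Fin n), tvec d n η A b σ‖ ≤ 4 * η * n * L * G := by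
  have hL : 0 < L := lt_of_lt_of_le hμ hμL
  have hG : 0 ≤ G := le_trans (norm_nonneg _) (hbG ⟨0, by omega⟩)
  have hηL : 0 ≤ η * L := mul_nonneg hη0 hL.le
  have hn0 : (0:ℝ) < n := by exact_mod_cast (by omega : 0 < n)
  have h2nL : (0:ℝ) < 2 * n * L := by positivity
  have hx1 : η * (2 * (n:ℝ) * L) ≤ 1 := by
    calc η * (2 * (n:ℝ) * L) ≤ (1/(2 * (n:ℝ) * L)) * (2 * (n:ℝ) * L) :=
          mul_le_mul_of_nonneg_right hη h2nL.le
      _ = 1 := by field_simp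
  set c : ℝ := 1 + η * L with hc
  have hc1 : 1 ≤ c := by rw [hc]; linarith
  have h1le : ‖(1 : EuclideanSpace ℝ (Fin d) →L[ℝ] EuclideanSpace ℝ (Fin d))‖ ≤ 1 := by
    rw [ContinuousLinearMap.one_def]; exact ContinuousLinearMap.norm_id_le
  have hfac : ∀ i : Fin n,
      ‖(1 : EuclideanSpace ℝ (Fin d) →L[ℝ] EuclideanSpace ℝ (Fin d)) - η • A i‖ ≤ c := by
    intro i
    have hsm : ‖η • A i‖ = η * ‖A i‖ := by
      have := norm_smul η (A i)
      rw [this, Real.norm_eq_abs, abs_of_nonneg hη0]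
    calc ‖(1 : EuclideanSpace ℝ (Fin d) →L[ℝ] EuclideanSpace ℝ (Fin d)) - η • A i‖
        ≤ ‖(1 : EuclideanSpace ℝ (Fin d) →L[ℝ] EuclideanSpace ℝ (Fin d))‖ + ‖η • A i‖ :=
          norm_sub_le _ _
      _ ≤ 1 + η * L := by
          have h2 : η * ‖A i‖ ≤ η * L := mul_le_mul_of_nonneg_left (hAL i) hη0
          rw [hsm] at *
          linarith
      _ = c := hc.symm
  have hcpow : ∀ j : Fin n, c ^ (n - 1 - (j:ℕ)) ≤ 2 := by
    intro j
    have hcast : ((n - 1 - (j:ℕ) : ℕ) : ℝ) ≤ (n:ℝ) := by exact_mod_cast (by omega : n - 1 - (j:ℕ) ≤ n)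
    have hKn : 2 * ((n - 1 - (j:ℕ) : ℕ) : ℝ) * (η * L) ≤ 1 := by nlinarith
    calc c ^ (n - 1 - (j:ℕ)) ≤ 1 + 2 * ((n - 1 - (j:ℕ) : ℕ) : ℝ) * (η * L) :=
          myPow_le (η * L) hηL _ hKn
      _ ≤ 2 := by linarith
  have hop : ∀ (σ : Equiv.Perm (Fin n)) (j p : Fin n),
      ‖Fop d n η A (σ * Equiv.swap j p) j - Fop d n η A σ j‖ ≤ 4 * η * L := by
    intro σ j p
    calc ‖Fop d n η A (σ * Equiv.swap j p) j - Fop d n η A σ j‖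
        ≤ c ^ (n - 1 - (j:ℕ)) * (2 * η * L) :=
          Fop_swap_diff d n η L A hη0 hL.le hAL c hc1 hfac σ j p
      _ ≤ 2 * (2 * η * L) := mul_le_mul_of_nonneg_right (hcpow j) (by positivity)
      _ = 4 * η * L := by ring
  have hSj := Sj_bound d n η L G A b hn hη0 hL.le hAL hG hbG hbsum hop
  have htv : ∑ σ : Equiv.Perm (Fin n), tvec d n η A b σ
      = ∑ j : Fin n, ∑ σ : Equiv.Perm (Fin n), Fop d n η A σ j (b (σ j)) := by
    rw [show (∑ σ : Equiv.Perm (Fin n), tvec d n η A b σ)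
        = ∑ σ : Equiv.Perm (Fin n), ∑ j : Fin n, Fop d n η A σ j (b (σ j)) from rfl,
      Finset.sum_comm]
  have hcard : (0:ℝ) < (Fintype.card (Equiv.Perm (Fin n)) : ℝ) := by
    exact_mod_cast Fintype.card_pos
  have hinv : (0:ℝ) ≤ (Fintype.card (Equiv.Perm (Fin n)) : ℝ)⁻¹ := inv_nonneg.2 hcard.le
  have hns : ‖(Fintype.card (Equiv.Perm (Fin n)) : ℝ)⁻¹ •
      ∑ σ : Equiv.Perm (Fin n), tvec d n η A b σ‖
      = (Fintype.card (Equiv.Perm (Fin n)) : ℝ)⁻¹ *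
        ‖∑ σ : Equiv.Perm (Fin n), tvec d n η A b σ‖ := by
    have := norm_smul ((Fintype.card (Equiv.Perm (Fin n)) : ℝ))⁻¹
      (∑ σ : Equiv.Perm (Fin n), tvec d n η A b σ)
    rw [this, Real.norm_eq_abs, abs_of_nonneg hinv]
  rw [hns]
  calc (Fintype.card (Equiv.Perm (Fin n)) : ℝ)⁻¹ *
        ‖∑ σ : Equiv.Perm (Fin n), tvec d n η A b σ‖
      ≤ (Fintype.card (Equiv.Perm (Fin n)) : ℝ)⁻¹ *
        ((n:ℝ) * ((Fintype.card (Equiv.Perm (Fin n)) : ℝ) * (4 * η * L * G))) := by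
        apply mul_le_mul_of_nonneg_left _ hinv
        rw [htv]
        calc ‖∑ j : Fin n, ∑ σ : Equiv.Perm (Fin n), Fop d n η A σ j (b (σ j))‖
            ≤ ∑ j : Fin n, ‖∑ σ : Equiv.Perm (Fin n), Fop d n η A σ j (b (σ j))‖ :=
              norm_sum_le _ _
          _ ≤ ∑ _j : Fin n, ((Fintype.card (Equiv.Perm (Fin n)) : ℝ) * (4 * η * L * G)) :=
              Finset.sum_le_sum fun j _ => hSj j
          _ = (n:ℝ) * ((Fintype.card (Equiv.Perm (Fin n)) : ℝ) * (4 * η * L * G)) := by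
              rw [Finset.sum_const, Finset.card_univ, Fintype.card_fin, nsmul_eq_mul]
    _ = 4 * η * (n:ℝ) * L * G := by
        field_simp
end

section
/- Let B_1,…,B_n be d×d real matrices with spectral norm ‖B_t‖ ≤ L for all t, and let A_1,…,A_n be symmetric d×d real matrices with ‖A_j‖ ≤ L for all j whose average (1/n)∑_{j=1}^n A_j ⪰ μI, where 0 < μ ≤ L and κ := L/μ. Then for every η with 0 ≤ η ≤ 1/(5 n L κ), the matrix S̃ := I − η ∑_{j=1}^n [ (I − ηB_n)(I − ηB_{n−1})···(I − ηB_{j+1}) ] A_j (products in decreasing index order, empty product = I) satisfies ‖S̃‖ ≤ 1 − η n μ / 2. -/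
open scoped RealInnerProductSpace

set_option maxHeartbeats 1000000

private lemma prod_sub_one_bound {E : Type*} [NormedRing E] (hone : ‖(1:E)‖ ≤ 1)
    (r : ℝ) (hr : 0 ≤ r) :
    ∀ l : List E, (∀ m ∈ l, ‖m - 1‖ ≤ r) → ‖l.prod - 1‖ ≤ (1+r)^l.length - 1 := by
  intro l
  induction l with
  | nil => simp
  | cons a t ih =>
    intro h
    have ha : ‖a - 1‖ ≤ r := h a (by simp)
    have ht := ih (fun m hm => h m (by simp [hm]))
    have hp : ‖t.prod‖ ≤ (1+r)^t.length := by
      calc ‖t.prod‖ = ‖(t.prod - 1) + 1‖ := by rw [sub_add_cancel]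
        _ ≤ ‖t.prod - 1‖ + ‖(1:E)‖ := norm_add_le _ _
        _ ≤ ((1+r)^t.length - 1) + 1 := add_le_add ht hone
        _ = (1+r)^t.length := by ring
    have key : (a :: t).prod - 1 = (a - 1) * t.prod + (t.prod - 1) := by
      rw [List.prod_cons]; noncomm_ring
    rw [key, List.length_cons]
    calc ‖(a-1)*t.prod + (t.prod - 1)‖ ≤ ‖(a-1)*t.prod‖ + ‖t.prod - 1‖ := norm_add_le _ _
      _ ≤ ‖a-1‖ * ‖t.prod‖ + ((1+r)^t.length - 1) := add_le_add (norm_mul_le _ _) ht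
      _ ≤ r * (1+r)^t.length + ((1+r)^t.length - 1) := by
          have := mul_le_mul ha hp (norm_nonneg _) hr
          linarith
      _ = (1+r)^(t.length+1) - 1 := by ring

/-- Contraction bound for the `SingleShuffle` epoch operator
`S̃ = I − η ∑_{j=1}^n (I − ηB_n)(I − ηB_{n−1})···(I − ηB_{j+1}) A_j`:
if `‖B_t‖ ≤ L`, the `A_j` are symmetric with `‖A_j‖ ≤ L` and average `⪰ μI`,
then `‖S̃‖ ≤ 1 − ηnμ/2` for every `0 ≤ η ≤ 1/(5nLκ)`. -/
theorem single_shuffle_contraction (d n : ℕ) (hn : 2 ≤ n) (μ L : ℝ)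
    (hμ : 0 < μ) (hμL : μ ≤ L)
    (B A : Fin n → EuclideanSpace ℝ (Fin d) →L[ℝ] EuclideanSpace ℝ (Fin d))
    (hBL : ∀ t, ‖B t‖ ≤ L)
    (hsymm : ∀ j x y, ⟪A j x, y⟫ = ⟪x, A j y⟫)
    (hAL : ∀ j, ‖A j‖ ≤ L)
    (hμI : ∀ x : EuclideanSpace ℝ (Fin d),
      μ * ‖x‖ ^ 2 ≤ ⟪x, ((n : ℝ)⁻¹ • ∑ j, A j) x⟫)
    (η : ℝ) (hη0 : 0 ≤ η) (hη : η ≤ 1 / (5 * n * L * (L / μ))) :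
    ‖(1 : EuclideanSpace ℝ (Fin d) →L[ℝ] EuclideanSpace ℝ (Fin d)) -
        η • ∑ j : Fin n,
          ((List.ofFn (fun s : Fin (n - 1 - (j : ℕ)) =>
              (1 : EuclideanSpace ℝ (Fin d) →L[ℝ] EuclideanSpace ℝ (Fin d)) -
                η • B ⟨n - 1 - (s : ℕ), by have hs := s.isLt; omega⟩)).prod) * A j‖ ≤
      1 - η * n * μ / 2 := by
  have hL : 0 < L := lt_of_lt_of_le hμ hμL
  have hn0 : (0:ℝ) < n := by exact_mod_cast Nat.lt_of_lt_of_le (by norm_num) hn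
  -- key scale bound : η * (n * L * L) ≤ μ / 5
  have hscale : η * ((n:ℝ) * L * L) ≤ μ / 5 := by
    have hX : (0:ℝ) < 5 * (n:ℝ) * L * (L / μ) := by positivity
    have h2 : η * (5 * (n:ℝ) * L * (L / μ)) ≤ 1 := (le_div_iff₀ hX).mp hη
    have h3 : η * (5 * (n:ℝ) * L * (L / μ)) * (μ / 5) ≤ 1 * (μ / 5) :=
      mul_le_mul_of_nonneg_right h2 (by positivity)
    have h4 : η * (5 * (n:ℝ) * L * (L / μ)) * (μ / 5) = η * ((n:ℝ) * L * L) := by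
      field_simp
    rw [h4, one_mul] at h3
    exact h3
  set T : EuclideanSpace ℝ (Fin d) →L[ℝ] EuclideanSpace ℝ (Fin d) := ∑ j, A j with hT
  set P : Fin n → (EuclideanSpace ℝ (Fin d) →L[ℝ] EuclideanSpace ℝ (Fin d)) := fun j =>
    (List.ofFn (fun s : Fin (n - 1 - (j : ℕ)) =>
      (1 : EuclideanSpace ℝ (Fin d) →L[ℝ] EuclideanSpace ℝ (Fin d)) -
        η • B ⟨n - 1 - (s : ℕ), by have hs := s.isLt; omega⟩)).prod with hP
  have hη1 : η * ((n:ℝ) * L) ≤ 1/5 := by nlinarith [hscale]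
  have hημ : η * ((n:ℝ) * μ) ≤ 1/5 := by nlinarith [hη1]
  -- bound ‖P j - 1‖
  have hPbound : ∀ j, ‖P j - 1‖ ≤ (5/4) * ((n:ℝ) * (η*L)) := by
    intro j
    have hmem : ∀ m ∈ (List.ofFn (fun s : Fin (n - 1 - (j : ℕ)) =>
      (1 : EuclideanSpace ℝ (Fin d) →L[ℝ] EuclideanSpace ℝ (Fin d)) -
        η • B ⟨n - 1 - (s : ℕ), by have hs := s.isLt; omega⟩)),
        ‖m - 1‖ ≤ η * L := by
      intro m hm
      rw [List.mem_ofFn] at hm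
      obtain ⟨s, rfl⟩ := hm
      have h0 : ∀ C : EuclideanSpace ℝ (Fin d) →L[ℝ] EuclideanSpace ℝ (Fin d),
          ‖(1 : EuclideanSpace ℝ (Fin d) →L[ℝ] EuclideanSpace ℝ (Fin d)) - η • C - 1‖ ≤ η * L →
          True := fun _ _ => trivial
      have h1 : (1 : EuclideanSpace ℝ (Fin d) →L[ℝ] EuclideanSpace ℝ (Fin d))
          - η • B ⟨n - 1 - (s : ℕ), by have hs := s.isLt; omega⟩ - 1
          = -(η • B ⟨n - 1 - (s : ℕ), by have hs := s.isLt; omega⟩) := by abel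
      rw [h1, norm_neg]
      calc ‖η • B ⟨n - 1 - (s : ℕ), by have hs := s.isLt; omega⟩‖
          ≤ ‖η‖ * ‖B ⟨n - 1 - (s : ℕ), by have hs := s.isLt; omega⟩‖ :=
              ContinuousLinearMap.opNorm_smul_le _ _
        _ = η * ‖B ⟨n - 1 - (s : ℕ), by have hs := s.isLt; omega⟩‖ := by
            rw [Real.norm_eq_abs, abs_of_nonneg hη0]
        _ ≤ η * L := mul_le_mul_of_nonneg_left (hBL _) hη0
    have h1 := prod_sub_one_bound (ContinuousLinearMap.norm_id_le) (η*L) (by positivity) _ hmem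
    rw [List.length_ofFn] at h1
    refine h1.trans ?_
    have hb1 : (1:ℝ) ≤ 1 + η*L := by nlinarith
    have hpow : (1+η*L)^(n - 1 - (j:ℕ)) ≤ (1+η*L)^n :=
      pow_le_pow_right₀ hb1 (by omega)
    have hexp : (1+η*L)^n ≤ Real.exp ((n:ℝ) * (η*L)) := by
      calc (1+η*L)^n ≤ (Real.exp (η*L))^n := by
            apply pow_le_pow_left₀ (by positivity)
            rw [add_comm]; exact Real.add_one_le_exp _
        _ = Real.exp ((n:ℝ) * (η*L)) := by rw [← Real.exp_nat_mul]
    have ht5 : (n:ℝ) * (η*L) ≤ 1/5 := by nlinarith [hη1]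
    have h1t : (0:ℝ) < 1 - (n:ℝ)*(η*L) := by linarith
    have hexp2 : Real.exp ((n:ℝ)*(η*L)) ≤ 1 / (1 - (n:ℝ)*(η*L)) := by
      have h2 := Real.add_one_le_exp (-((n:ℝ)*(η*L)))
      rw [Real.exp_neg] at h2
      rw [le_div_iff₀ h1t]
      calc Real.exp ((n:ℝ)*(η*L)) * (1 - (n:ℝ)*(η*L))
          ≤ Real.exp ((n:ℝ)*(η*L)) * (Real.exp ((n:ℝ)*(η*L)))⁻¹ := by
            apply mul_le_mul_of_nonneg_left _ (Real.exp_pos _).le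
            linarith
        _ = 1 := mul_inv_cancel₀ (Real.exp_pos _).ne'
    have hfin : 1 / (1 - (n:ℝ)*(η*L)) ≤ 1 + (5/4) * ((n:ℝ)*(η*L)) := by
      rw [div_le_iff₀ h1t]
      have h0 : (0:ℝ) ≤ (n:ℝ)*(η*L) := by positivity
      nlinarith
    linarith
  -- bound for (1 - η • T)
  have hTnorm : ‖T‖ ≤ (n:ℝ) * L := by
    calc ‖T‖ ≤ ∑ j : Fin n, ‖A j‖ := norm_sum_le _ _
      _ ≤ ∑ _j : Fin n, L := Finset.sum_le_sum (fun j _ => hAL j)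
      _ = (n:ℝ) * L := by simp [mul_comm]
  have hμT : ∀ x : EuclideanSpace ℝ (Fin d), (n:ℝ) * μ * ‖x‖^2 ≤ ⟪x, T x⟫ := by
    intro x
    have h1 := hμI x
    rw [ContinuousLinearMap.smul_apply, real_inner_smul_right] at h1
    have h2 : (n:ℝ) * (μ * ‖x‖^2) ≤ (n:ℝ) * ((n:ℝ)⁻¹ * ⟪x, T x⟫) :=
      mul_le_mul_of_nonneg_left h1 hn0.le
    have h3 : (n:ℝ) * ((n:ℝ)⁻¹ * ⟪x, T x⟫) = ⟪x, T x⟫ := by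
      rw [← mul_assoc, mul_inv_cancel₀ hn0.ne', one_mul]
    rw [h3] at h2
    linarith [h2]
  have hc0 : (0:ℝ) ≤ 1 - (9/10) * (η * ((n:ℝ)*μ)) := by linarith [hημ]
  have hstep1 : ∀ x : EuclideanSpace ℝ (Fin d),
      ‖((1 : EuclideanSpace ℝ (Fin d) →L[ℝ] EuclideanSpace ℝ (Fin d)) - η • T) x‖
        ≤ (1 - (9/10) * (η * ((n:ℝ)*μ))) * ‖x‖ := by
    intro x
    have hxv : ((1 : EuclideanSpace ℝ (Fin d) →L[ℝ] EuclideanSpace ℝ (Fin d)) - η • T) x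
        = x - η • T x := by
      simp [ContinuousLinearMap.sub_apply]
    rw [hxv]
    have hsq : ‖x - η • T x‖^2 = ‖x‖^2 - 2 * ⟪x, η • T x⟫ + ‖η • T x‖^2 :=
      norm_sub_sq_real x (η • T x)
    have hin : η * ((n:ℝ) * μ * ‖x‖^2) ≤ ⟪x, η • T x⟫ := by
      rw [real_inner_smul_right]
      exact mul_le_mul_of_nonneg_left (hμT x) hη0
    have hTx : ‖η • T x‖ ≤ η * ((n:ℝ)*L) * ‖x‖ := by
      rw [norm_smul, Real.norm_eq_abs, abs_of_nonneg hη0, mul_assoc]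
      apply mul_le_mul_of_nonneg_left _ hη0
      calc ‖T x‖ ≤ ‖T‖ * ‖x‖ := T.le_opNorm x
        _ ≤ (n:ℝ)*L*‖x‖ := mul_le_mul_of_nonneg_right hTnorm (norm_nonneg _)
    have hTx2 : ‖η • T x‖^2 ≤ (η * ((n:ℝ)*L))^2 * ‖x‖^2 := by
      rw [← mul_pow]
      exact pow_le_pow_left₀ (norm_nonneg _) hTx 2
    have hkey : ‖x - η • T x‖^2 ≤ ((1 - (9/10) * (η * ((n:ℝ)*μ))) * ‖x‖)^2 := by
      rw [hsq, mul_pow]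
      have hLsq : (η * ((n:ℝ)*L))^2 ≤ (η * ((n:ℝ)*μ))/5 := by
        have he : (η * ((n:ℝ)*L))^2 = (η * ((n:ℝ)*L*L)) * (η * (n:ℝ)) := by ring
        rw [he]
        have h0 : (0:ℝ) ≤ η * (n:ℝ) := by positivity
        nlinarith [hscale]
      nlinarith [sq_nonneg ‖x‖, sq_nonneg (η * ((n:ℝ)*μ)),
        mul_le_mul_of_nonneg_right hLsq (sq_nonneg ‖x‖), hημ,
        mul_nonneg (mul_nonneg hη0 (mul_nonneg hn0.le hμ.le)) (sq_nonneg ‖x‖)]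
    exact (pow_le_pow_iff_left₀ (norm_nonneg _)
      (mul_nonneg hc0 (norm_nonneg _)) two_ne_zero).mp hkey
  -- algebraic split
  have hsplit : (1 : EuclideanSpace ℝ (Fin d) →L[ℝ] EuclideanSpace ℝ (Fin d))
      - η • ∑ j, P j * A j
      = ((1 : EuclideanSpace ℝ (Fin d) →L[ℝ] EuclideanSpace ℝ (Fin d)) - η • T)
        - η • ∑ j, (P j - 1) * A j := by
    have h1 : ∑ j, (P j - 1) * A j = (∑ j, P j * A j) - T := by
      rw [hT, ← Finset.sum_sub_distrib]
      exact Finset.sum_congr rfl (fun j _ => by rw [sub_mul, one_mul])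
    rw [h1, smul_sub]
    abel
  rw [hsplit]
  have hRnorm : ‖η • ∑ j, (P j - 1) * A j‖ ≤ η * ((n:ℝ) * ((5/4) * ((n:ℝ) * (η*L)) * L)) := by
    calc ‖η • ∑ j, (P j - 1) * A j‖ ≤ ‖η‖ * ‖∑ j, (P j - 1) * A j‖ :=
          ContinuousLinearMap.opNorm_smul_le _ _
      _ = η * ‖∑ j, (P j - 1) * A j‖ := by rw [Real.norm_eq_abs, abs_of_nonneg hη0]
      _ ≤ η * ((n:ℝ) * ((5/4) * ((n:ℝ) * (η*L)) * L)) := by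
        apply mul_le_mul_of_nonneg_left _ hη0
        calc ‖∑ j, (P j - 1) * A j‖ ≤ ∑ j : Fin n, ‖(P j - 1) * A j‖ := norm_sum_le _ _
      _ ≤ ∑ _j : Fin n, (5/4) * ((n:ℝ) * (η*L)) * L := by
          apply Finset.sum_le_sum
          intro j _
          calc ‖(P j - 1) * A j‖ ≤ ‖P j - 1‖ * ‖A j‖ := norm_mul_le _ _
            _ ≤ (5/4) * ((n:ℝ) * (η*L)) * L := by
                apply mul_le_mul (hPbound j) (hAL j) (norm_nonneg _)
                positivity
      _ = (n:ℝ) * ((5/4) * ((n:ℝ) * (η*L)) * L) := by simp [mul_comm]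
  have hfirst : ‖(1 : EuclideanSpace ℝ (Fin d) →L[ℝ] EuclideanSpace ℝ (Fin d)) - η • T‖
      ≤ 1 - (9/10) * (η * ((n:ℝ)*μ)) :=
    ContinuousLinearMap.opNorm_le_bound _ hc0 hstep1
  calc ‖((1 : EuclideanSpace ℝ (Fin d) →L[ℝ] EuclideanSpace ℝ (Fin d)) - η • T)
        - η • ∑ j, (P j - 1) * A j‖
      ≤ ‖(1 : EuclideanSpace ℝ (Fin d) →L[ℝ] EuclideanSpace ℝ (Fin d)) - η • T‖
        + ‖η • ∑ j, (P j - 1) * A j‖ := norm_sub_le _ _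
    _ ≤ (1 - (9/10) * (η * ((n:ℝ)*μ))) + η * ((n:ℝ) * ((5/4) * ((n:ℝ) * (η*L)) * L)) :=
        add_le_add hfirst hRnorm
    _ ≤ 1 - η * n * μ / 2 := by
        have h0 : (0:ℝ) ≤ (5/4) * (η * (n:ℝ)) := by positivity
        nlinarith [mul_le_mul_of_nonneg_left hscale h0]
end

section
/- Let {ξ_k}_{k≥0} be a sequence of positive real numbers, and suppose there exist an initial index k₀ > 0 and real numbers A > 0 and α > β > 0 such that ξ_{k+1} ≤ exp(−α/(k₀+k+1)) · ξ_k + A/(k₀+k+1)^{β+1} for every integer k ≥ 0. Then for every integer K ≥ 1, ξ_K ≤ (k₀+1)^α ξ_0/(k₀+K)^α + (1/(α−β)) e^{α/(k₀+1)} A/(k₀+K)^β + e^{α/(k₀+1)} A/(k₀+K)^{β+1}. -/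
open Finset Real

/-- telescoping log lower bound for harmonic-type sums -/
lemma chung_log_sum (c : ℝ) (hc : 0 < c) (j K : ℕ) (hjK : j ≤ K) :
    Real.log (c + K + 1) - Real.log (c + j + 1) ≤
      ∑ k ∈ Finset.Ico j K, 1 / (c + k + 1) := by
  induction K with
  | zero => interval_cases j; simp
  | succ K ih =>
    rcases Nat.lt_or_ge j (K + 1) with h | h
    · have hj : j ≤ K := Nat.lt_succ_iff.mp h
      rw [Finset.sum_Ico_succ_top hj]
      have hx : (0:ℝ) < c + K + 1 := by positivity
      have hx2 : (0:ℝ) < c + (K:ℝ) + 2 := by positivity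
      have h1 : Real.log (c + (K:ℝ) + 2) - Real.log (c + K + 1) ≤ 1 / (c + K + 1) := by
        have h2 := Real.log_le_sub_one_of_pos
          (x := (c + (K:ℝ) + 2) / (c + K + 1)) (by positivity)
        rw [Real.log_div (by positivity) (by positivity)] at h2
        have heq : (c + (K:ℝ) + 2) / (c + K + 1) - 1 = 1 / (c + K + 1) := by
          field_simp
          norm_num
        linarith
      have h3 := ih hj
      push_cast at h3 h1 ⊢
      have hrw : c + ((K:ℝ) + 1) + 1 = c + (K:ℝ) + 2 := by ring
      rw [hrw]
      linarith
    · have hj : j = K + 1 := le_antisymm hjK h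
      subst hj; simp

/-- discrete integral bound, multiplied through by γ -/
lemma chung_sum_pow (c γ : ℝ) (hc : 0 < c) (hγ : 0 < γ) (K : ℕ) :
    γ * ∑ j ∈ Finset.range K, (c + j + 1) ^ (γ - 1)
      ≤ (c + K) ^ γ + γ * (c + K) ^ (γ - 1) := by
  rcases le_or_gt 1 γ with hγ1 | hγ1
  · -- γ ≥ 1 case
    induction K with
    | zero =>
      simp only [Finset.range_zero, Finset.sum_empty, mul_zero, Nat.cast_zero, add_zero]
      positivity
    | succ K ih =>
      rw [Finset.sum_range_succ]
      have hK : (0:ℝ) < c + K := by positivity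
      have hK1 : (0:ℝ) < c + K + 1 := by positivity
      have hb := one_add_mul_self_le_rpow_one_add (s := 1 / (c + K))
        (by linarith [one_div_nonneg.mpr hK.le]) hγ1
      have h1s : (1 : ℝ) + 1 / (c + K) = (c + K + 1) / (c + K) := by field_simp
      rw [h1s, Real.div_rpow hK1.le hK.le] at hb
      have key : (c + K) ^ γ + γ * (c + K) ^ (γ - 1) ≤ (c + K + 1) ^ γ := by
        have h2 : (c + K) ^ (γ - 1) = (c + K) ^ γ / (c + K) := by
          rw [Real.rpow_sub hK, Real.rpow_one]
        rw [h2]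
        have h3 := mul_le_mul_of_nonneg_right hb (Real.rpow_pos_of_pos hK γ).le
        have h4 : (1 + γ * (1 / (c + K))) * (c + K) ^ γ
            = (c + K) ^ γ + γ * ((c + K) ^ γ / (c + K)) := by ring
        have h5 : (c + K + 1) ^ γ / (c + K) ^ γ * (c + K) ^ γ = (c + K + 1) ^ γ := by
          field_simp
        linarith [h4 ▸ h5 ▸ h3]
      have hmono : (c + K) ^ (γ - 1) ≤ (c + K + 1) ^ (γ - 1) :=
        Real.rpow_le_rpow hK.le (by linarith) (by linarith)
      push_cast
      have hr : c + ((K:ℝ) + 1) = c + (K:ℝ) + 1 := by ring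
      rw [hr, mul_add]
      nlinarith [key, hmono, hγ]
  · -- γ < 1 case : stronger bound without the extra term
    have main : γ * ∑ j ∈ Finset.range K, (c + j + 1) ^ (γ - 1) ≤ (c + K) ^ γ := by
      induction K with
      | zero =>
        simp only [Finset.range_zero, Finset.sum_empty, mul_zero, Nat.cast_zero, add_zero]
        positivity
      | succ K ih =>
        rw [Finset.sum_range_succ]
        have hK : (0:ℝ) < c + K := by positivity
        have hK1 : (0:ℝ) < c + K + 1 := by positivity
        have hb := rpow_one_add_le_one_add_mul_self (s := -(1 / (c + K + 1)))
          (by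
            have h0 : 1 / (c + K + 1) ≤ 1 := by
              rw [div_le_one hK1]; linarith
            linarith) hγ.le hγ1.le
        have h1s : (1 : ℝ) + -(1 / (c + K + 1)) = (c + K) / (c + K + 1) := by
          field_simp
          ring
        rw [h1s, Real.div_rpow hK.le hK1.le] at hb
        have key : (c + K) ^ γ + γ * (c + K + 1) ^ (γ - 1) ≤ (c + K + 1) ^ γ := by
          have h2 : (c + K + 1) ^ (γ - 1) = (c + K + 1) ^ γ / (c + K + 1) := by
            rw [Real.rpow_sub hK1, Real.rpow_one]
          rw [h2]
          have h3 := mul_le_mul_of_nonneg_right hb (Real.rpow_pos_of_pos hK1 γ).le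
          have h4 : (1 + γ * -(1 / (c + K + 1))) * (c + K + 1) ^ γ
              = (c + K + 1) ^ γ - γ * ((c + K + 1) ^ γ / (c + K + 1)) := by ring
          have h5 : (c + K) ^ γ / (c + K + 1) ^ γ * (c + K + 1) ^ γ = (c + K) ^ γ := by
            field_simp
          linarith [h4 ▸ h5 ▸ h3]
        push_cast
        have hr : c + ((K:ℝ) + 1) = c + (K:ℝ) + 1 := by ring
        rw [hr, mul_add]
        linarith [ih]
    have hpos : (0:ℝ) ≤ γ * (c + K) ^ (γ - 1) := by positivity
    linarith

lemma chung_unroll (ξ : ℕ → ℝ) (c A α β : ℝ)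
    (hrec : ∀ k : ℕ,
      ξ (k + 1) ≤ Real.exp (-α / (c + k + 1)) * ξ k + A / (c + k + 1) ^ (β + 1)) :
    ∀ K : ℕ, ξ K ≤
      Real.exp (-α * ∑ k ∈ Finset.range K, 1 / (c + k + 1)) * ξ 0
        + ∑ j ∈ Finset.range K,
            Real.exp (-α * ∑ k ∈ Finset.Ico (j + 1) K, 1 / (c + k + 1))
              * (A / (c + j + 1) ^ (β + 1)) := by
  intro K
  induction K with
  | zero => simp
  | succ K ih =>
    have h1 : Real.exp (-α / (c + K + 1)) * ξ K ≤
        Real.exp (-α / (c + K + 1)) *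
          (Real.exp (-α * ∑ k ∈ Finset.range K, 1 / (c + k + 1)) * ξ 0
            + ∑ j ∈ Finset.range K,
                Real.exp (-α * ∑ k ∈ Finset.Ico (j + 1) K, 1 / (c + k + 1))
                  * (A / (c + j + 1) ^ (β + 1))) :=
      mul_le_mul_of_nonneg_left ih (Real.exp_nonneg _)
    have hhead : Real.exp (-α / (c + K + 1)) *
        Real.exp (-α * ∑ k ∈ Finset.range K, 1 / (c + k + 1))
        = Real.exp (-α * ∑ k ∈ Finset.range (K + 1), 1 / (c + k + 1)) := by
      rw [← Real.exp_add, Finset.sum_range_succ]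
      congr 1
      ring
    have hsum : ∑ j ∈ Finset.range K, Real.exp (-α / (c + K + 1)) *
          (Real.exp (-α * ∑ k ∈ Finset.Ico (j + 1) K, 1 / (c + k + 1))
            * (A / (c + j + 1) ^ (β + 1)))
        = ∑ j ∈ Finset.range K,
            Real.exp (-α * ∑ k ∈ Finset.Ico (j + 1) (K + 1), 1 / (c + k + 1))
              * (A / (c + j + 1) ^ (β + 1)) := by
      apply Finset.sum_congr rfl
      intro j hj
      rw [Finset.sum_Ico_succ_top (Finset.mem_range.mp hj : j + 1 ≤ K),
        ← mul_assoc, ← Real.exp_add]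
      congr 2
      ring
    have heq :
        Real.exp (-α / (c + K + 1)) *
          (Real.exp (-α * ∑ k ∈ Finset.range K, 1 / (c + k + 1)) * ξ 0
            + ∑ j ∈ Finset.range K,
                Real.exp (-α * ∑ k ∈ Finset.Ico (j + 1) K, 1 / (c + k + 1))
                  * (A / (c + j + 1) ^ (β + 1)))
          + A / (c + K + 1) ^ (β + 1)
        = Real.exp (-α * ∑ k ∈ Finset.range (K + 1), 1 / (c + k + 1)) * ξ 0
            + ∑ j ∈ Finset.range (K + 1),
                Real.exp (-α * ∑ k ∈ Finset.Ico (j + 1) (K + 1), 1 / (c + k + 1))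
                  * (A / (c + j + 1) ^ (β + 1)) := by
      rw [Finset.sum_range_succ (f := fun j =>
        Real.exp (-α * ∑ k ∈ Finset.Ico (j + 1) (K + 1), 1 / (c + k + 1))
          * (A / (c + j + 1) ^ (β + 1)))]
      rw [Finset.Ico_self, Finset.sum_empty, mul_zero, Real.exp_zero, one_mul]
      rw [← hsum, ← hhead, ← Finset.mul_sum]
      ring
    calc ξ (K + 1) ≤ Real.exp (-α / (c + K + 1)) * ξ K + A / (c + K + 1) ^ (β + 1) :=
          hrec K
      _ ≤ _ := by rw [← heq]; linarith


/-- Non-asymptotic Chung's lemma. -/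
theorem chung_lemma (ξ : ℕ → ℝ) (k₀ A α β : ℝ)
    (hξ : ∀ k, 0 < ξ k) (hk₀ : 0 < k₀) (hA : 0 < A) (hβ : 0 < β) (hβα : β < α)
    (hrec : ∀ k : ℕ,
      ξ (k + 1) ≤ Real.exp (-α / (k₀ + k + 1)) * ξ k + A / (k₀ + k + 1) ^ (β + 1)) :
    ∀ K : ℕ, 1 ≤ K →
      ξ K ≤ (k₀ + 1) ^ α * ξ 0 / (k₀ + K) ^ α
          + (1 / (α - β)) * Real.exp (α / (k₀ + 1)) * A / (k₀ + K) ^ β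
          + Real.exp (α / (k₀ + 1)) * A / (k₀ + K) ^ (β + 1) := by
  intro K hK
  have hα : 0 < α := lt_trans hβ hβα
  have hγ : 0 < α - β := by linarith
  have hK1 : (1:ℝ) ≤ (K:ℝ) := by exact_mod_cast hK
  have hP : (0:ℝ) < k₀ + K := by linarith
  have hP1 : (0:ℝ) < k₀ + K + 1 := by linarith
  have hc1 : (0:ℝ) < k₀ + 1 := by linarith
  have start := chung_unroll ξ k₀ A α β hrec K
  -- head bound
  have hhead : Real.exp (-α * ∑ k ∈ Finset.range K, 1 / (k₀ + k + 1))
      ≤ (k₀ + 1) ^ α / (k₀ + K) ^ α := by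
    have hls := chung_log_sum k₀ hk₀ 0 K (Nat.zero_le K)
    rw [← Finset.range_eq_Ico] at hls
    push_cast at hls
    rw [show k₀ + (0:ℝ) + 1 = k₀ + 1 from by ring] at hls
    have h1 : Real.log (k₀ + K) ≤ Real.log (k₀ + K + 1) :=
      Real.log_le_log hP (by linarith)
    have h2 := mul_le_mul_of_nonneg_left hls hα.le
    have h1' := mul_le_mul_of_nonneg_left h1 hα.le
    calc Real.exp (-α * ∑ k ∈ Finset.range K, 1 / (k₀ + k + 1))
        ≤ Real.exp (Real.log (k₀ + 1) * α - Real.log (k₀ + K) * α) := by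
          apply Real.exp_le_exp.mpr
          nlinarith [h2, h1']
      _ = (k₀ + 1) ^ α / (k₀ + K) ^ α := by
          rw [Real.exp_sub, Real.rpow_def_of_pos hc1, Real.rpow_def_of_pos hP]
  -- per-term bound
  have hterm : ∀ j ∈ Finset.range K,
      Real.exp (-α * ∑ k ∈ Finset.Ico (j + 1) K, 1 / (k₀ + k + 1))
          * (A / (k₀ + j + 1) ^ (β + 1))
      ≤ Real.exp (α / (k₀ + 1)) * A / (k₀ + K) ^ α * (k₀ + j + 1) ^ (α - β - 1) := by
    intro j hj
    have hjK : j + 1 ≤ K := Finset.mem_range.mp hj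
    have hq : (0:ℝ) < k₀ + j + 1 := by positivity
    have hq2 : (0:ℝ) < k₀ + j + 2 := by linarith
    have hls := chung_log_sum k₀ hk₀ (j + 1) K hjK
    push_cast at hls
    rw [show k₀ + ((j:ℝ) + 1) + 1 = k₀ + (j:ℝ) + 1 + 1 from by ring] at hls
    -- hls : log (k₀+K+1) - log (k₀+(j+1)+1) ≤ ∑ ...
    have h1 : Real.log (k₀ + K) ≤ Real.log (k₀ + K + 1) :=
      Real.log_le_log hP (by linarith)
    have hlog2 : Real.log (k₀ + (j:ℝ) + 1 + 1) ≤ Real.log (k₀ + j + 1) + 1 / (k₀ + 1) := by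
      have h3 := Real.log_le_sub_one_of_pos
        (show (0:ℝ) < (k₀ + j + 2) / (k₀ + j + 1) by positivity)
      rw [Real.log_div (by positivity) hq.ne'] at h3
      have hd : (k₀ + (j:ℝ) + 2) / (k₀ + j + 1) - 1 = 1 / (k₀ + j + 1) := by
        field_simp
        norm_num
      have hmono : 1 / (k₀ + (j:ℝ) + 1) ≤ 1 / (k₀ + 1) := by
        apply one_div_le_one_div_of_le hc1
        have : (0:ℝ) ≤ (j:ℝ) := Nat.cast_nonneg j
        linarith
      have hr : k₀ + (j:ℝ) + 1 + 1 = k₀ + j + 2 := by ring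
      rw [hr]
      linarith
    have h2 := mul_le_mul_of_nonneg_left hls hα.le
    have hE : Real.exp (-α * ∑ k ∈ Finset.Ico (j + 1) K, 1 / (k₀ + k + 1))
        ≤ Real.exp (α / (k₀ + 1)) * ((k₀ + j + 1) ^ α / (k₀ + K) ^ α) := by
      calc Real.exp (-α * ∑ k ∈ Finset.Ico (j + 1) K, 1 / (k₀ + k + 1))
          ≤ Real.exp (α / (k₀ + 1) + (Real.log (k₀ + j + 1) * α - Real.log (k₀ + K) * α)) := by
            apply Real.exp_le_exp.mpr
            have a2 := mul_le_mul_of_nonneg_left h1 hα.le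
            have a3 := mul_le_mul_of_nonneg_left hlog2 hα.le
            rw [mul_add, mul_one_div] at a3
            linarith [h2, a2, a3]
        _ = Real.exp (α / (k₀ + 1)) * ((k₀ + j + 1) ^ α / (k₀ + K) ^ α) := by
            rw [Real.exp_add, Real.exp_sub, Real.rpow_def_of_pos hq, Real.rpow_def_of_pos hP]
    have hApos : (0:ℝ) ≤ A / (k₀ + j + 1) ^ (β + 1) := by positivity
    have h4 := mul_le_mul_of_nonneg_right hE hApos
    have h5 : Real.exp (α / (k₀ + 1)) * ((k₀ + j + 1) ^ α / (k₀ + K) ^ α)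
        * (A / (k₀ + j + 1) ^ (β + 1))
        = Real.exp (α / (k₀ + 1)) * A / (k₀ + K) ^ α * (k₀ + j + 1) ^ (α - β - 1) := by
      have e1 : (k₀ + (j:ℝ) + 1) ^ (α - β - 1)
          = (k₀ + j + 1) ^ α / (k₀ + j + 1) ^ (β + 1) := by
        rw [← Real.rpow_sub hq]
        congr 1
        ring
      rw [e1]
      ring
    rw [h5] at h4
    exact h4
  -- sum the term bounds
  have hsum := Finset.sum_le_sum hterm
  rw [← Finset.mul_sum] at hsum
  have hpow := chung_sum_pow k₀ (α - β) hk₀ hγ K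
  -- multiply hpow by the nonneg constant X/γ where X = exp(α/(k₀+1))*A/(k₀+K)^α
  set X := Real.exp (α / (k₀ + 1)) * A / (k₀ + K) ^ α with hX
  have hXpos : 0 < X := by positivity
  have hsum2 : X * ∑ j ∈ Finset.range K, (k₀ + j + 1) ^ (α - β - 1)
      ≤ X / (α - β) * ((k₀ + K) ^ (α - β) + (α - β) * (k₀ + K) ^ (α - β - 1)) := by
    have h := mul_le_mul_of_nonneg_left hpow (le_of_lt (div_pos hXpos hγ))
    have heq : X / (α - β) * ((α - β) * ∑ j ∈ Finset.range K, (k₀ + j + 1) ^ (α - β - 1))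
        = X * ∑ j ∈ Finset.range K, (k₀ + j + 1) ^ (α - β - 1) := by
      field_simp
    rw [heq] at h
    exact h
  -- rewrite powers
  have e1 : (k₀ + (K:ℝ)) ^ (α - β) / (k₀ + K) ^ α = 1 / (k₀ + K) ^ β := by
    rw [← Real.rpow_sub hP]
    have : α - β - α = -β := by ring
    rw [this, Real.rpow_neg hP.le, one_div]
  have e2 : (k₀ + (K:ℝ)) ^ (α - β - 1) / (k₀ + K) ^ α = 1 / (k₀ + K) ^ (β + 1) := by
    rw [← Real.rpow_sub hP]
    have : α - β - 1 - α = -(β + 1) := by ring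
    rw [this, Real.rpow_neg hP.le, one_div]
  have q1 : X * (k₀ + (K:ℝ)) ^ (α - β)
      = Real.exp (α / (k₀ + 1)) * A / (k₀ + K) ^ β := by
    calc X * (k₀ + (K:ℝ)) ^ (α - β)
        = Real.exp (α / (k₀ + 1)) * A * ((k₀ + (K:ℝ)) ^ (α - β) / (k₀ + K) ^ α) := by
          rw [hX]; ring
      _ = Real.exp (α / (k₀ + 1)) * A * (1 / (k₀ + K) ^ β) := by rw [e1]
      _ = Real.exp (α / (k₀ + 1)) * A / (k₀ + K) ^ β := by ring
  have q2 : X * (k₀ + (K:ℝ)) ^ (α - β - 1)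
      = Real.exp (α / (k₀ + 1)) * A / (k₀ + K) ^ (β + 1) := by
    calc X * (k₀ + (K:ℝ)) ^ (α - β - 1)
        = Real.exp (α / (k₀ + 1)) * A * ((k₀ + (K:ℝ)) ^ (α - β - 1) / (k₀ + K) ^ α) := by
          rw [hX]; ring
      _ = Real.exp (α / (k₀ + 1)) * A * (1 / (k₀ + K) ^ (β + 1)) := by rw [e2]
      _ = Real.exp (α / (k₀ + 1)) * A / (k₀ + K) ^ (β + 1) := by ring
  have hfinal : X / (α - β) * ((k₀ + K) ^ (α - β) + (α - β) * (k₀ + K) ^ (α - β - 1))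
      = (1 / (α - β)) * Real.exp (α / (k₀ + 1)) * A / (k₀ + K) ^ β
        + Real.exp (α / (k₀ + 1)) * A / (k₀ + K) ^ (β + 1) := by
    have expand : X / (α - β) * ((k₀ + (K:ℝ)) ^ (α - β) + (α - β) * (k₀ + K) ^ (α - β - 1))
        = 1 / (α - β) * (X * (k₀ + (K:ℝ)) ^ (α - β)) + X * (k₀ + (K:ℝ)) ^ (α - β - 1) := by
      field_simp
    rw [expand, q1, q2]
    ring
  -- head × ξ0
  have hhead2 : Real.exp (-α * ∑ k ∈ Finset.range K, 1 / (k₀ + k + 1)) * ξ 0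
      ≤ (k₀ + 1) ^ α * ξ 0 / (k₀ + K) ^ α := by
    have := mul_le_mul_of_nonneg_right hhead (hξ 0).le
    calc Real.exp (-α * ∑ k ∈ Finset.range K, 1 / (k₀ + k + 1)) * ξ 0
        ≤ (k₀ + 1) ^ α / (k₀ + K) ^ α * ξ 0 := this
      _ = (k₀ + 1) ^ α * ξ 0 / (k₀ + K) ^ α := by ring
  linarith [start, hsum, hsum2, hhead2, hfinal.le, hfinal.ge]
end

section
/- Let n > 0 be an integer and {ξ_k}_{k≥0} a sequence of positive real numbers. Suppose there exist an initial index k₀ > 0 and real numbers A₁, A₂ > 0, α > β > 0, and ε > 0 such that (i) ξ₁ ≤ exp(−α ∑_{i=1}^{n} 1/(k₀+i)) · ξ₀ + A₁, and (ii) ξ_{k+1} ≤ exp(−α ∑_{i=1}^{n} 1/(k₀+nk+i) + ε/k²) · ξ_k + A₂/(k₀+n(k+1))^{β+1} for every integer k ≥ 1. Then for every integer K ≥ 1, with c := e^{ε π²/6}, one has ξ_K ≤ c (k₀+1)^α ξ₀/(k₀+nK)^α + c (k₀+n+1)^α A₁/(k₀+nK)^α + (c/(α−β)) e^{α/(k₀+n+1)}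 A₂/(n (k₀+nK)^β) + c e^{α/(k₀+n+1)} A₂/(k₀+nK)^{β+1}. -/
section ChungAux
open Real Finset


lemma tele_sum (f : ℕ → ℝ) (m N : ℕ) :
    ∑ k ∈ Finset.Icc m N, (f (k+1) - f k) = f (N + 1 - m + m) - f m := by
  rw [← Finset.Ico_add_one_right_eq_Icc, Finset.sum_Ico_eq_sum_range]
  have h := Finset.sum_range_sub (fun i => f (m + i)) (N + 1 - m)
  calc ∑ i ∈ Finset.range (N + 1 - m), (f (m + i + 1) - f (m + i))
      = ∑ i ∈ Finset.range (N + 1 - m), ((fun i => f (m + i)) (i+1) - (fun i => f (m + i)) i) := by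
        apply Finset.sum_congr rfl; intro i _; simp [Nat.add_assoc]
    _ = f (m + (N + 1 - m)) - f m := by rw [h]; simp
    _ = f (N + 1 - m + m) - f m := by rw [Nat.add_comm]

lemma aux_logsum (n : ℕ) (a : ℝ) (ha : 0 < a) :
    Real.log (a + n + 1) - Real.log (a + 1) ≤ ∑ i ∈ Finset.Icc 1 n, 1 / (a + i) := by
  have key : ∀ i ∈ Finset.Icc 1 n,
      (fun i : ℕ => Real.log (a + i)) (i+1) - (fun i : ℕ => Real.log (a + i)) i ≤ 1 / (a + i) := by
    intro i _
    have hai : (0:ℝ) < a + i := by positivity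
    have h2 : (0:ℝ) < (a + i + 1) / (a + i) := by positivity
    have h3 := Real.log_le_sub_one_of_pos h2
    rw [Real.log_div (by positivity) hai.ne'] at h3
    simp only
    push_cast
    calc Real.log (a + (i + 1)) - Real.log (a + i)
        = Real.log (a + i + 1) - Real.log (a + i) := by ring_nf
      _ ≤ (a + i + 1) / (a + i) - 1 := h3
      _ = 1 / (a + i) := by field_simp; ring
  calc Real.log (a + n + 1) - Real.log (a + 1)
      = (fun i : ℕ => Real.log (a + i)) (n + 1 - 1 + 1) - (fun i : ℕ => Real.log (a + i)) 1 := by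
        simp only [Nat.add_sub_cancel]; push_cast; ring_nf
    _ = ∑ i ∈ Finset.Icc 1 n, ((fun i : ℕ => Real.log (a + i)) (i+1) - (fun i : ℕ => Real.log (a + i)) i) :=
        (tele_sum (fun i : ℕ => Real.log (a + i)) 1 n).symm
    _ ≤ ∑ i ∈ Finset.Icc 1 n, 1 / (a + i) := Finset.sum_le_sum key


lemma aux_contract (n : ℕ) (a α : ℝ) (ha : 0 < a) (hα : 0 < α) :
    Real.exp (-(α * ∑ i ∈ Finset.Icc 1 n, 1 / (a + i))) ≤ (a+1)^α / (a+(n:ℝ)+1)^α := by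
  have h1 : 0 < a + 1 := by linarith
  have h2 : 0 < a + (n:ℝ) + 1 := by positivity
  have hls := aux_logsum n a ha
  have key : -(α * ∑ i ∈ Finset.Icc 1 n, 1 / (a + i)) ≤ Real.log ((a+1)^α / (a+(n:ℝ)+1)^α) := by
    rw [Real.log_div (by positivity) (by positivity), Real.log_rpow h1, Real.log_rpow h2]
    nlinarith [hls]
  calc Real.exp (-(α * ∑ i ∈ Finset.Icc 1 n, 1 / (a + i)))
      ≤ Real.exp (Real.log ((a+1)^α / (a+(n:ℝ)+1)^α)) := Real.exp_le_exp.mpr key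
    _ = (a+1)^α / (a+(n:ℝ)+1)^α := Real.exp_log (by positivity)

lemma aux_plusone (α c m : ℝ) (hα : 0 < α) (hc : 0 < c) (hm : c ≤ m) :
    (m+1)^α ≤ Real.exp (α/c) * m^α := by
  have hm0 : 0 < m := lt_of_lt_of_le hc hm
  have h1 : (0:ℝ) < (m+1)/m := by positivity
  have hlog : Real.log ((m+1)/m) ≤ 1/c := by
    have := Real.log_le_sub_one_of_pos h1
    have h2 : (m+1)/m - 1 = 1/m := by field_simp; ring
    have h3 : 1/m ≤ 1/c := by
      apply one_div_le_one_div_of_le hc hm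
    linarith
  have key : (m+1)^α = Real.exp (α * Real.log ((m+1)/m)) * m^α := by
    rw [← Real.log_rpow h1, Real.exp_log (by positivity), Real.div_rpow (by positivity) hm0.le]
    field_simp
  rw [key]
  apply mul_le_mul_of_nonneg_right _ (by positivity)
  rw [Real.exp_le_exp, div_eq_mul_one_div α c]
  exact mul_le_mul_of_nonneg_left hlog hα.le


lemma bern1 (p a d : ℝ) (hp : 1 ≤ p) (ha : 0 < a) (hd : 0 ≤ d) :
    p * d * a ^ (p - 1) ≤ (a + d) ^ p - a ^ p := by
  have hs : (0:ℝ) ≤ d / a := by positivity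
  have hb := one_add_mul_self_le_rpow_one_add (by linarith : (-1:ℝ) ≤ d/a) hp
  have h1 : (a + d) ^ p = a ^ p * (1 + d/a) ^ p := by
    rw [← Real.mul_rpow ha.le (by linarith)]
    congr 1; field_simp
  have h2 : a ^ p * (d / a) = d * a ^ (p-1) := by
    rw [Real.rpow_sub ha, Real.rpow_one]; field_simp
  have h3 : a ^ p * (1 + p * (d/a)) ≤ a ^ p * (1 + d/a) ^ p :=
    mul_le_mul_of_nonneg_left hb (by positivity)
  calc p * d * a ^ (p-1) = a ^ p * (1 + p * (d/a)) - a ^ p := by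
        rw [mul_add, mul_one, mul_comm p (d/a), ← mul_assoc, h2]; ring
    _ ≤ a ^ p * (1 + d/a) ^ p - a ^ p := by linarith
    _ = (a + d) ^ p - a ^ p := by rw [h1]

-- case p ≤ 1
lemma bern2 (p b d : ℝ) (hp0 : 0 < p) (hp : p ≤ 1) (hd : 0 ≤ d) (hdb : d ≤ b) (hb : 0 < b) :
    p * d * b ^ (p - 1) ≤ b ^ p - (b - d) ^ p := by
  have hs : -1 ≤ -(d/b) := by
    rw [neg_le_neg_iff]; exact div_le_one_of_le₀ hdb hb.le
  have hb2 := rpow_one_add_le_one_add_mul_self hs hp0.le hp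
  have hnn : (0:ℝ) ≤ 1 + -(d/b) := by
    have : 1 + -(d/b) = (b-d)/b := by field_simp; ring
    rw [this]
    have : 0 ≤ b - d := by linarith
    positivity
  have h1 : (b - d) ^ p = b ^ p * (1 + -(d/b)) ^ p := by
    rw [← Real.mul_rpow hb.le hnn]
    congr 1; field_simp; ring
  have h2 : b ^ p * (d / b) = d * b ^ (p-1) := by
    rw [Real.rpow_sub hb, Real.rpow_one]; field_simp
  have h3 : b ^ p * (1 + -(d/b)) ^ p ≤ b ^ p * (1 + p * -(d/b)) :=
    mul_le_mul_of_nonneg_left hb2 (by positivity)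
  calc p * d * b ^ (p-1) = b ^ p - b ^ p * (1 + p * -(d/b)) := by
        have : b ^ p * (1 + p * -(d/b)) = b ^ p - p * (b ^ p * (d/b)) := by ring
        rw [this, h2]; ring
    _ ≤ b ^ p - b ^ p * (1 + -(d/b)) ^ p := by linarith
    _ = b ^ p - (b - d) ^ p := by rw [h1]


lemma aux_sumbound (n : ℕ) (hn : 0 < n) (k₀ p : ℝ) (hk₀ : 0 < k₀) (hp : 0 < p)
    (K : ℕ) (hK : 1 ≤ K) :
    ∑ k ∈ Finset.Icc 2 (K-1), (k₀ + (n:ℝ)*k) ^ (p-1) ≤ (k₀ + (n:ℝ)*K) ^ p / ((n:ℝ)*p) := by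
  have hn' : (0:ℝ) < n := by exact_mod_cast hn
  have hnp : (0:ℝ) < (n:ℝ)*p := by positivity
  have hKpos : (0:ℝ) < k₀ + (n:ℝ)*K := by positivity
  rcases le_total 1 p with hp1 | hp1
  · -- p ≥ 1
    set f : ℕ → ℝ := fun k => (k₀ + (n:ℝ)*k) ^ p with hf
    have key : ∀ k ∈ Finset.Icc 2 (K-1),
        (k₀ + (n:ℝ)*k) ^ (p-1) ≤ (f (k+1) - f k) / ((n:ℝ)*p) := by
      intro k _
      rw [le_div_iff₀ hnp]
      have ha : (0:ℝ) < k₀ + (n:ℝ)*k := by positivity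
      have := bern1 p (k₀ + (n:ℝ)*k) n hp1 ha hn'.le
      have he : (k₀ + (n:ℝ)*k + n) = (k₀ + (n:ℝ)*(k+1:ℕ)) := by push_cast; ring
      rw [he] at this
      simp only [hf]
      calc (k₀ + (n:ℝ)*k) ^ (p-1) * ((n:ℝ)*p) = p * n * (k₀ + (n:ℝ)*k) ^ (p-1) := by ring
        _ ≤ (k₀ + (n:ℝ)*(k+1:ℕ)) ^ p - (k₀ + (n:ℝ)*k) ^ p := this
    calc ∑ k ∈ Finset.Icc 2 (K-1), (k₀ + (n:ℝ)*k) ^ (p-1)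
        ≤ ∑ k ∈ Finset.Icc 2 (K-1), (f (k+1) - f k) / ((n:ℝ)*p) := Finset.sum_le_sum key
      _ = (f (K - 1 + 1 - 2 + 2) - f 2) / ((n:ℝ)*p) := by
          rw [← Finset.sum_div, tele_sum f 2 (K-1)]
      _ ≤ (k₀ + (n:ℝ)*K) ^ p / ((n:ℝ)*p) := by
          gcongr
          have hf2 : 0 ≤ f 2 := by simp only [hf]; positivity
          have hfm : f (K - 1 + 1 - 2 + 2) ≤ (k₀ + (n:ℝ)*K) ^ p + f 2 := by
            rcases Nat.lt_or_ge K 2 with h2 | h2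
            · interval_cases K
              · have hpos : (0:ℝ) ≤ (k₀ + (n:ℝ)*((1:ℕ):ℝ))^p := by positivity
                have e : (1 - 1 + 1 - 2 + 2 : ℕ) = 2 := by norm_num
                rw [e]
                push_cast at hpos ⊢
                linarith
            · have : K - 1 + 1 - 2 + 2 = K := by omega
              rw [this]
              have : f K ≤ (k₀ + (n:ℝ)*K) ^ p := le_refl _
              linarith
          linarith
  · -- p ≤ 1
    set g : ℕ → ℝ := fun k => (k₀ + (n:ℝ)*k - n) ^ p with hg
    have key : ∀ k ∈ Finset.Icc 2 (K-1),
        (k₀ + (n:ℝ)*k) ^ (p-1) ≤ (g (k+1) - g k) / ((n:ℝ)*p) := by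
      intro k hk
      rw [Finset.mem_Icc] at hk
      have hk2 : (2:ℝ) ≤ (k:ℝ) := by exact_mod_cast hk.1
      rw [le_div_iff₀ hnp]
      have hb : (0:ℝ) < k₀ + (n:ℝ)*k := by positivity
      have hdb : (n:ℝ) ≤ k₀ + (n:ℝ)*k := by nlinarith
      have := bern2 p (k₀ + (n:ℝ)*k) n hp hp1 hn'.le hdb hb
      have he1 : (k₀ + (n:ℝ)*(k+1:ℕ) - n) = (k₀ + (n:ℝ)*k) := by push_cast; ring
      simp only [hg, he1]
      calc (k₀ + (n:ℝ)*k) ^ (p-1) * ((n:ℝ)*p) = p * n * (k₀ + (n:ℝ)*k) ^ (p-1) := by ring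
        _ ≤ (k₀ + (n:ℝ)*k) ^ p - (k₀ + (n:ℝ)*k - n) ^ p := this
    calc ∑ k ∈ Finset.Icc 2 (K-1), (k₀ + (n:ℝ)*k) ^ (p-1)
        ≤ ∑ k ∈ Finset.Icc 2 (K-1), (g (k+1) - g k) / ((n:ℝ)*p) := Finset.sum_le_sum key
      _ = (g (K - 1 + 1 - 2 + 2) - g 2) / ((n:ℝ)*p) := by
          rw [← Finset.sum_div, tele_sum g 2 (K-1)]
      _ ≤ (k₀ + (n:ℝ)*K) ^ p / ((n:ℝ)*p) := by
          gcongr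
          have hg2 : 0 ≤ g 2 := by
            simp only [hg]
            apply Real.rpow_nonneg
            push_cast; nlinarith
          have hgm : g (K - 1 + 1 - 2 + 2) ≤ (k₀ + (n:ℝ)*K) ^ p := by
            simp only [hg]
            apply Real.rpow_le_rpow _ _ hp.le
            · have h2 : (2:ℝ) ≤ ((K - 1 + 1 - 2 + 2 : ℕ):ℝ) := by
                have : 2 ≤ K - 1 + 1 - 2 + 2 := by omega
                exact_mod_cast this
              nlinarith
            · have h3 : (K - 1 + 1 - 2 + 2 : ℕ) ≤ K + 1 := by omega
              have h3' : ((K - 1 + 1 - 2 + 2 : ℕ):ℝ) ≤ (K:ℝ) + 1 := by exact_mod_cast h3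
              nlinarith
          linarith


lemma main_ind (n : ℕ) (hn : 0 < n) (ξ : ℕ → ℝ) (k₀ A₁ A₂ α β ε : ℝ)
    (hξ : ∀ k, 0 < ξ k) (hk₀ : 0 < k₀) (hA₁ : 0 < A₁) (hA₂ : 0 < A₂)
    (hβ : 0 < β) (hβα : β < α) (hε : 0 < ε)
    (h1 : ξ 1 ≤ Real.exp (-(α * ∑ i ∈ Finset.Icc 1 n, 1 / (k₀ + (i : ℝ)))) * ξ 0 + A₁)
    (hrec : ∀ k : ℕ, 1 ≤ k →
      ξ (k + 1) ≤
        Real.exp (-(α * ∑ i ∈ Finset.Icc 1 n, 1 / (k₀ + (n : ℝ) * (k : ℝ) + (i : ℝ)))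
            + ε / (k : ℝ) ^ 2) * ξ k
          + A₂ / (k₀ + (n : ℝ) * ((k : ℝ) + 1)) ^ (β + 1)) :
    ∀ K : ℕ, 1 ≤ K →
      ξ K * (k₀ + (n:ℝ)*K + 1) ^ α ≤
        Real.exp (ε * ∑ j ∈ Finset.Icc 1 (K-1), 1/(j:ℝ)^2) *
          ((k₀+1)^α * ξ 0 + (k₀+(n:ℝ)+1)^α * A₁
            + A₂ * ∑ k ∈ Finset.Icc 2 K, (k₀+(n:ℝ)*k+1)^α / (k₀+(n:ℝ)*k)^(β+1)) := by
  have hα : 0 < α := lt_trans hβ hβα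
  intro K hK
  induction K, hK using Nat.le_induction with
  | base =>
    have hc := aux_contract n k₀ α hk₀ hα
    have hD : (0:ℝ) < (k₀+(n:ℝ)+1)^α := by positivity
    have e0 : (k₀ + (n:ℝ)*(1:ℕ) + 1) = (k₀+(n:ℝ)+1) := by push_cast; ring
    rw [e0]
    have e1 : (1:ℕ) - 1 = 0 := rfl
    rw [e1]
    have e2 : Finset.Icc 1 0 = (∅ : Finset ℕ) := by
      apply Finset.Icc_eq_empty_of_lt; norm_num
    have e3 : Finset.Icc 2 1 = (∅ : Finset ℕ) := by
      apply Finset.Icc_eq_empty_of_lt; norm_num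
    rw [e2, e3]
    simp only [Finset.sum_empty, mul_zero, add_zero]
    rw [Real.exp_zero, one_mul]
    have h2 : ξ 1 ≤ (k₀+1)^α / (k₀+(n:ℝ)+1)^α * ξ 0 + A₁ := by
      refine h1.trans ?_
      have := aux_contract n k₀ α hk₀ hα
      have hξ0 := (hξ 0).le
      nlinarith [this, hξ0]
    calc ξ 1 * (k₀+(n:ℝ)+1)^α ≤ ((k₀+1)^α / (k₀+(n:ℝ)+1)^α * ξ 0 + A₁) * (k₀+(n:ℝ)+1)^α := by
          apply mul_le_mul_of_nonneg_right h2 hD.le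
      _ = (k₀+1)^α * ξ 0 + (k₀+(n:ℝ)+1)^α * A₁ := by
          field_simp
  | succ K hK ih =>
    have hKR : (1:ℝ) ≤ (K:ℝ) := by exact_mod_cast hK
    set a : ℝ := k₀ + (n:ℝ)*(K:ℝ) with ha
    have ha0 : 0 < a := by positivity
    have han : 0 < a + (n:ℝ) := by positivity
    have hD : (0:ℝ) < (a+1)^α := by positivity
    have hD' : (0:ℝ) < (a+(n:ℝ)+1)^α := by positivity
    -- contraction bound
    have hc := aux_contract n a α ha0 hα
    -- the recursion
    have hr := hrec K hK
    -- rewrite the denominators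
    have e4 : k₀ + (n:ℝ)*((K:ℝ)+1) = a + n := by rw [ha]; ring
    have e5 : (k₀ + (n:ℝ)*((K+1:ℕ):ℝ) + 1) = a + n + 1 := by rw [ha]; push_cast; ring
    rw [e4] at hr
    rw [e5]
    set S := ∑ k ∈ Finset.Icc 2 K, (k₀+(n:ℝ)*k+1)^α / (k₀+(n:ℝ)*k)^(β+1) with hS
    set E := Real.exp (ε * ∑ j ∈ Finset.Icc 1 (K-1), 1/(j:ℝ)^2) with hE
    set M : ℝ := (k₀+1)^α * ξ 0 + (k₀+(n:ℝ)+1)^α * A₁ + A₂ * S with hM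
    have hSnn : 0 ≤ S := by
      apply Finset.sum_nonneg
      intro k _
      positivity
    have hMnn : 0 ≤ M := by
      have := (hξ 0).le
      have h0 : (0:ℝ) ≤ (k₀+1)^α * ξ 0 := by positivity
      have h1' : (0:ℝ) ≤ (k₀+(n:ℝ)+1)^α * A₁ := by positivity
      have h2' : (0:ℝ) ≤ A₂ * S := by positivity
      rw [hM]; linarith
    -- new E
    have sumE : ∑ j ∈ Finset.Icc 1 (K+1-1), 1/(j:ℝ)^2
        = (∑ j ∈ Finset.Icc 1 (K-1), 1/(j:ℝ)^2) + 1/(K:ℝ)^2 := by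
      have e6 : K + 1 - 1 = (K - 1) + 1 := by omega
      rw [e6, Finset.sum_Icc_succ_top (by omega : 1 ≤ (K-1) + 1)]
      have e7 : K - 1 + 1 = K := by omega
      rw [e7]
    have hE' : Real.exp (ε * ∑ j ∈ Finset.Icc 1 (K+1-1), 1/(j:ℝ)^2)
        = Real.exp (ε / (K:ℝ)^2) * E := by
      rw [sumE, hE, ← Real.exp_add]
      congr 1
      ring
    have hE'1 : (1:ℝ) ≤ Real.exp (ε * ∑ j ∈ Finset.Icc 1 (K+1-1), 1/(j:ℝ)^2) := by
      apply Real.one_le_exp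
      apply mul_nonneg hε.le
      apply Finset.sum_nonneg
      intro j _
      positivity
    -- new S
    have sumS : ∑ k ∈ Finset.Icc 2 (K+1), (k₀+(n:ℝ)*k+1)^α / (k₀+(n:ℝ)*k)^(β+1)
        = S + (a+(n:ℝ)+1)^α / (a+(n:ℝ))^(β+1) := by
      rw [Finset.sum_Icc_succ_top (by omega : 2 ≤ K + 1), hS]
      congr 2 <;> (rw [ha]; push_cast; ring_nf)
    -- main chain
    have step1 : ξ (K+1) ≤ Real.exp (ε/(K:ℝ)^2) * ((a+1)^α / (a+(n:ℝ)+1)^α) * ξ K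
        + A₂ / (a+(n:ℝ))^(β+1) := by
      refine hr.trans ?_
      have hsplit : Real.exp (-(α * ∑ i ∈ Finset.Icc 1 n, 1 / (a + (i:ℝ))) + ε / (K:ℝ)^2)
          = Real.exp (ε/(K:ℝ)^2) * Real.exp (-(α * ∑ i ∈ Finset.Icc 1 n, 1 / (a + (i:ℝ)))) := by
        rw [← Real.exp_add]; congr 1; ring
      have hξK := (hξ K).le
      have hexp : (0:ℝ) < Real.exp (ε/(K:ℝ)^2) := Real.exp_pos _
      gcongr ?_ + _
      rw [hsplit]
      apply mul_le_mul_of_nonneg_right _ hξK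
      exact mul_le_mul_of_nonneg_left hc hexp.le
    have step2 : ξ (K+1) * (a+(n:ℝ)+1)^α ≤ Real.exp (ε/(K:ℝ)^2) * (ξ K * (a+1)^α)
        + A₂ * ((a+(n:ℝ)+1)^α / (a+(n:ℝ))^(β+1)) := by
      calc ξ (K+1) * (a+(n:ℝ)+1)^α
          ≤ (Real.exp (ε/(K:ℝ)^2) * ((a+1)^α / (a+(n:ℝ)+1)^α) * ξ K
              + A₂ / (a+(n:ℝ))^(β+1)) * (a+(n:ℝ)+1)^α := by
            apply mul_le_mul_of_nonneg_right step1 hD'.le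
        _ = Real.exp (ε/(K:ℝ)^2) * (ξ K * (a+1)^α)
              + A₂ * ((a+(n:ℝ)+1)^α / (a+(n:ℝ))^(β+1)) := by
            field_simp
    have step3 : Real.exp (ε/(K:ℝ)^2) * (ξ K * (a+1)^α) ≤ Real.exp (ε/(K:ℝ)^2) * (E * M) := by
      apply mul_le_mul_of_nonneg_left _ (Real.exp_pos _).le
      exact ih
    have hq : (0:ℝ) ≤ (a+(n:ℝ)+1)^α / (a+(n:ℝ))^(β+1) := by positivity
    calc ξ (K+1) * (a+(n:ℝ)+1)^α
        ≤ Real.exp (ε/(K:ℝ)^2) * (E * M) + A₂ * ((a+(n:ℝ)+1)^α / (a+(n:ℝ))^(β+1)) := by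
          linarith [step2, step3]
      _ ≤ Real.exp (ε * ∑ j ∈ Finset.Icc 1 (K+1-1), 1/(j:ℝ)^2) * M
          + Real.exp (ε * ∑ j ∈ Finset.Icc 1 (K+1-1), 1/(j:ℝ)^2)
            * (A₂ * ((a+(n:ℝ)+1)^α / (a+(n:ℝ))^(β+1))) := by
          have hq2 : (0:ℝ) ≤ A₂ * ((a+(n:ℝ)+1)^α / (a+(n:ℝ))^(β+1)) := by positivity
          have h2'' := le_mul_of_one_le_left hq2 hE'1
          rw [hE'] at h2'' ⊢
          ring_nf at h2'' ⊢
          linarith [h2'']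
      _ = Real.exp (ε * ∑ j ∈ Finset.Icc 1 (K+1-1), 1/(j:ℝ)^2) *
          ((k₀+1)^α * ξ 0 + (k₀+(n:ℝ)+1)^α * A₁
            + A₂ * ∑ k ∈ Finset.Icc 2 (K+1), (k₀+(n:ℝ)*k+1)^α / (k₀+(n:ℝ)*k)^(β+1)) := by
          rw [sumS, hM]
          ring


end ChungAux

/-- A variant of Chung's lemma capturing the dependence on both `n` and `K`. -/
theorem chung_lemma_variant (n : ℕ) (hn : 0 < n) (ξ : ℕ → ℝ) (k₀ A₁ A₂ α β ε : ℝ)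
    (hξ : ∀ k, 0 < ξ k) (hk₀ : 0 < k₀) (hA₁ : 0 < A₁) (hA₂ : 0 < A₂)
    (hβ : 0 < β) (hβα : β < α) (hε : 0 < ε)
    (h1 : ξ 1 ≤ Real.exp (-(α * ∑ i ∈ Finset.Icc 1 n, 1 / (k₀ + (i : ℝ)))) * ξ 0 + A₁)
    (hrec : ∀ k : ℕ, 1 ≤ k →
      ξ (k + 1) ≤
        Real.exp (-(α * ∑ i ∈ Finset.Icc 1 n, 1 / (k₀ + (n : ℝ) * (k : ℝ) + (i : ℝ)))
            + ε / (k : ℝ) ^ 2) * ξ k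
          + A₂ / (k₀ + (n : ℝ) * ((k : ℝ) + 1)) ^ (β + 1)) :
    ∀ K : ℕ, 1 ≤ K →
      ξ K ≤ Real.exp (ε * Real.pi ^ 2 / 6) * (k₀ + 1) ^ α * ξ 0 / (k₀ + (n : ℝ) * K) ^ α
          + Real.exp (ε * Real.pi ^ 2 / 6) * (k₀ + (n : ℝ) + 1) ^ α * A₁
              / (k₀ + (n : ℝ) * K) ^ α
          + (Real.exp (ε * Real.pi ^ 2 / 6) / (α - β)) * Real.exp (α / (k₀ + (n : ℝ) + 1))
              * A₂ / ((n : ℝ) * (k₀ + (n : ℝ) * K) ^ β)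
          + Real.exp (ε * Real.pi ^ 2 / 6) * Real.exp (α / (k₀ + (n : ℝ) + 1)) * A₂
              / (k₀ + (n : ℝ) * K) ^ (β + 1) := by
  intro K hK
  have ind := main_ind n hn ξ k₀ A₁ A₂ α β ε hξ hk₀ hA₁ hA₂ hβ hβα hε h1 hrec K hK

  have hα : 0 < α := lt_trans hβ hβα
  have hn' : (0:ℝ) < n := by exact_mod_cast hn
  have hKR : (1:ℝ) ≤ (K:ℝ) := by exact_mod_cast hK
  set x : ℝ := k₀ + (n:ℝ)*K with hx
  have hx0 : 0 < x := by positivity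
  have hx1 : 0 < (x+1)^α := by positivity
  have hxα : 0 < x^α := by positivity
  set c : ℝ := Real.exp (ε * Real.pi ^ 2 / 6) with hc
  set F : ℝ := Real.exp (α / (k₀ + (n:ℝ) + 1)) with hF
  have hcpos : 0 < c := Real.exp_pos _
  have hFpos : 0 < F := Real.exp_pos _
  set E : ℝ := Real.exp (ε * ∑ j ∈ Finset.Icc 1 (K-1), 1/(j:ℝ)^2) with hE
  set S : ℝ := ∑ k ∈ Finset.Icc 2 K, (k₀+(n:ℝ)*k+1)^α / (k₀+(n:ℝ)*k)^(β+1) with hS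
  -- E ≤ c
  have hEc : E ≤ c := by
    rw [hE, hc, Real.exp_le_exp]
    have hsum : ∑ j ∈ Finset.Icc 1 (K-1), 1/(j:ℝ)^2 ≤ Real.pi^2/6 := by
      apply sum_le_hasSum _ _ hasSum_zeta_two
      intro i _
      positivity
    calc ε * ∑ j ∈ Finset.Icc 1 (K-1), 1/(j:ℝ)^2 ≤ ε * (Real.pi^2/6) :=
          mul_le_mul_of_nonneg_left hsum hε.le
      _ = ε * Real.pi^2/6 := by ring
  -- bound S
  have hSb : S ≤ F * (x^(α-β)/((n:ℝ)*(α-β)) + x^(α-β-1)) := by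
    have hterm : ∀ k ∈ Finset.Icc 2 K,
        (k₀+(n:ℝ)*k+1)^α / (k₀+(n:ℝ)*k)^(β+1) ≤ F * (k₀+(n:ℝ)*k)^(α-β-1) := by
      intro k hk
      rw [Finset.mem_Icc] at hk
      have hk2 : (2:ℝ) ≤ (k:ℝ) := by exact_mod_cast hk.1
      have hm0 : (0:ℝ) < k₀+(n:ℝ)*k := by positivity
      have hn1 : (1:ℝ) ≤ (n:ℝ) := by exact_mod_cast hn
      have hcm : k₀ + (n:ℝ) + 1 ≤ k₀ + (n:ℝ)*k := by nlinarith [mul_le_mul_of_nonneg_left hk2 hn'.le]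
      have h1 := aux_plusone α (k₀+(n:ℝ)+1) (k₀+(n:ℝ)*k) hα (by positivity) hcm
      have h2 : (k₀+(n:ℝ)*k+1)^α / (k₀+(n:ℝ)*k)^(β+1)
          ≤ F * (k₀+(n:ℝ)*k)^α / (k₀+(n:ℝ)*k)^(β+1) := by
        gcongr
      have h3 : F * (k₀+(n:ℝ)*k)^α / (k₀+(n:ℝ)*k)^(β+1) = F * (k₀+(n:ℝ)*k)^(α-β-1) := by
        rw [mul_div_assoc, ← Real.rpow_sub hm0]
        ring_nf
      rw [← h3]
      exact h2
    have hsplit : ∑ k ∈ Finset.Icc 2 K, (k₀+(n:ℝ)*k)^(α-β-1)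
        ≤ (∑ k ∈ Finset.Icc 2 (K-1), (k₀+(n:ℝ)*k)^(α-β-1)) + x^(α-β-1) := by
      rcases Nat.lt_or_ge K 2 with h2 | h2
      · interval_cases K
        · have hpos : (0:ℝ) ≤ x^(α-β-1) := by positivity
          have hsum0 : ∑ k ∈ Finset.Icc 2 (1:ℕ), (k₀+(n:ℝ)*k)^(α-β-1) = 0 := by
            rw [Finset.Icc_eq_empty_of_lt (by norm_num)]; simp
          simp only [hsum0]
          apply add_nonneg _ hpos
          apply Finset.sum_nonneg; intro k _; positivity
      · have e : K = (K-1) + 1 := by omega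
        rw [e, Finset.sum_Icc_succ_top (by omega : 2 ≤ (K-1)+1)]
        have e2 : K - 1 + 1 = K := by omega
        have e3 : ((K - 1 + 1:ℕ):ℝ) = (K:ℝ) := by exact_mod_cast e2
        rw [e3, ← hx]
        rw [e2]
    have hsum2 := aux_sumbound n hn k₀ (α-β) hk₀ (by linarith) K hK
    calc S ≤ ∑ k ∈ Finset.Icc 2 K, F * (k₀+(n:ℝ)*k)^(α-β-1) := Finset.sum_le_sum hterm
      _ = F * ∑ k ∈ Finset.Icc 2 K, (k₀+(n:ℝ)*k)^(α-β-1) := by rw [Finset.mul_sum]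
      _ ≤ F * ((∑ k ∈ Finset.Icc 2 (K-1), (k₀+(n:ℝ)*k)^(α-β-1)) + x^(α-β-1)) :=
          mul_le_mul_of_nonneg_left hsplit hFpos.le
      _ ≤ F * (x^(α-β)/((n:ℝ)*(α-β)) + x^(α-β-1)) := by
          apply mul_le_mul_of_nonneg_left _ hFpos.le
          linarith [hsum2]
  -- final assembly
  set C₀ : ℝ := (k₀+1)^α * ξ 0 + (k₀+(n:ℝ)+1)^α * A₁ with hC₀
  set B1 : ℝ := x^(α-β)/((n:ℝ)*(α-β)) with hB1
  set B2 : ℝ := x^(α-β-1) with hB2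
  have hC₀nn : 0 ≤ C₀ := by
    have := (hξ 0).le
    have h0 : (0:ℝ) ≤ (k₀+1)^α * ξ 0 := by positivity
    have h1' : (0:ℝ) ≤ (k₀+(n:ℝ)+1)^α * A₁ := by positivity
    rw [hC₀]; linarith
  have hSnn : 0 ≤ S := by
    rw [hS]; apply Finset.sum_nonneg; intro k _; positivity
  have hMnn : 0 ≤ C₀ + A₂ * S := by positivity
  have hB1nn : 0 ≤ B1 := by
    rw [hB1]
    have : 0 < α - β := by linarith
    positivity
  have hB2nn : 0 ≤ B2 := by rw [hB2]; positivity
  have key1 : ξ K * (x+1)^α ≤ c * (C₀ + A₂ * (F * (B1 + B2))) := by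
    calc ξ K * (x+1)^α ≤ E * (C₀ + A₂ * S) := ind
      _ ≤ c * (C₀ + A₂ * S) := mul_le_mul_of_nonneg_right hEc hMnn
      _ ≤ c * (C₀ + A₂ * (F * (B1 + B2))) := by
          apply mul_le_mul_of_nonneg_left _ hcpos.le
          have := mul_le_mul_of_nonneg_left hSb hA₂.le
          linarith
  have key2 : ξ K ≤ c * (C₀ + A₂ * (F * (B1 + B2))) / (x+1)^α :=
    (le_div_iff₀ hx1).mpr key1
  have hxx : x^α ≤ (x+1)^α := Real.rpow_le_rpow hx0.le (by linarith) hα.le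
  have hxβ : 0 < x^β := by positivity
  have hxβ1 : 0 < x^(β+1) := by positivity
  have hαβ : 0 < α - β := by linarith
  have hxe : x^(α-β) * x^β = x^α := by
    rw [← Real.rpow_add hx0]; congr 1; ring
  have hxe2 : x^(α-β-1) * x^(β+1) = x^α := by
    rw [← Real.rpow_add hx0]; congr 1; ring
  have expand : c * (C₀ + A₂ * (F * (B1 + B2))) / (x+1)^α
      = c * ((k₀+1)^α * ξ 0) / (x+1)^α + c * ((k₀+(n:ℝ)+1)^α * A₁) / (x+1)^α
        + c * (A₂ * (F * B1)) / (x+1)^α + c * (A₂ * (F * B2)) / (x+1)^α := by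
    rw [hC₀]; ring
  have t1 : c * ((k₀+1)^α * ξ 0) / (x+1)^α ≤ c * (k₀+1)^α * ξ 0 / x^α := by
    rw [show c * ((k₀+1)^α * ξ 0) = c * (k₀+1)^α * ξ 0 by ring]
    gcongr
    exact mul_nonneg (by positivity) (hξ 0).le
  have t2 : c * ((k₀+(n:ℝ)+1)^α * A₁) / (x+1)^α ≤ c * (k₀+(n:ℝ)+1)^α * A₁ / x^α := by
    rw [show c * ((k₀+(n:ℝ)+1)^α * A₁) = c * (k₀+(n:ℝ)+1)^α * A₁ by ring]
    gcongr
  have t3 : c * (A₂ * (F * B1)) / (x+1)^α ≤ c / (α-β) * F * A₂ / ((n:ℝ) * x^β) := by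
    have step : c * (A₂ * (F * B1)) / (x+1)^α ≤ c * (A₂ * (F * B1)) / x^α := by
      gcongr
    refine step.trans_eq ?_
    rw [hB1]
    field_simp
    linear_combination hxe
  have t4 : c * (A₂ * (F * B2)) / (x+1)^α ≤ c * F * A₂ / x^(β+1) := by
    have step : c * (A₂ * (F * B2)) / (x+1)^α ≤ c * (A₂ * (F * B2)) / x^α := by
      gcongr
    refine step.trans_eq ?_
    rw [hB2]
    field_simp
    linear_combination hxe2
  calc ξ K ≤ c * (C₀ + A₂ * (F * (B1 + B2))) / (x+1)^α := key2
    _ = c * ((k₀+1)^α * ξ 0) / (x+1)^α + c * ((k₀+(n:ℝ)+1)^α * A₁) / (x+1)^α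
        + c * (A₂ * (F * B1)) / (x+1)^α + c * (A₂ * (F * B2)) / (x+1)^α := expand
    _ ≤ c * (k₀+1)^α * ξ 0 / x^α + c * (k₀+(n:ℝ)+1)^α * A₁ / x^α
        + c / (α-β) * F * A₂ / ((n:ℝ) * x^β) + c * F * A₂ / x^(β+1) := by
        exact add_le_add (add_le_add (add_le_add t1 t2) t3) t4
end

section
/- For every natural number n and every integer m with 2 ≤ m ≤ n, one has C(2n, m) − 2^m C(n, m) ≤ (2n)^m / m! − 2^m C(n, m) ≤ (2n)^{m−1} / (m−2)!, where C(a, b) denotes the binomial coefficient. -/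
open Finset

/-- Telescoping lower bound for a product of `x - a i`. -/
lemma prod_sub_lower (x : ℝ) (a : ℕ → ℝ) :
    ∀ k : ℕ, (∀ i ≤ k, 0 ≤ a i ∧ a i ≤ x) →
      x ^ (k + 1) - (∑ i ∈ range (k + 1), a i) * x ^ k ≤
        ∏ i ∈ range (k + 1), (x - a i) := by
  intro k
  induction k with
  | zero => intro h; simp
  | succ k ih =>
    intro h
    have hx : 0 ≤ x := le_trans (h 0 (by omega)).1 (h 0 (by omega)).2
    have hIH := ih (fun i hi => h i (by omega))
    have hnonneg : ∀ i ∈ range (k + 1), (0:ℝ) ≤ x - a i := by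
      intro i hi
      simp only [mem_range] at hi
      linarith [(h i (by omega)).2]
    have hub : ∏ i ∈ range (k + 1), (x - a i) ≤ x ^ (k + 1) := by
      calc ∏ i ∈ range (k + 1), (x - a i) ≤ ∏ i ∈ range (k + 1), x := by
            apply Finset.prod_le_prod hnonneg
            intro i hi
            linarith [(h i (by simp only [mem_range] at hi; omega)).1]
        _ = x ^ (k + 1) := by simp
    have hprodnn : 0 ≤ ∏ i ∈ range (k + 1), (x - a i) :=
      Finset.prod_nonneg hnonneg
    rw [prod_range_succ, sum_range_succ]
    have hak := h (k + 1) le_rfl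
    have h1 : (x ^ (k + 1) - (∑ i ∈ range (k + 1), a i) * x ^ k) * x ≤
        (∏ i ∈ range (k + 1), (x - a i)) * x := by
      apply mul_le_mul_of_nonneg_right hIH hx
    have h2 : (∏ i ∈ range (k + 1), (x - a i)) * a (k + 1) ≤ x ^ (k + 1) * a (k + 1) :=
      mul_le_mul_of_nonneg_right hub hak.1
    have h1' : x ^ (k + 1 + 1) - (∑ i ∈ range (k + 1), a i) * x ^ (k + 1) ≤
        (∏ i ∈ range (k + 1), (x - a i)) * x := by
      have he : (x ^ (k + 1) - (∑ i ∈ range (k + 1), a i) * x ^ k) * x =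
          x ^ (k + 1 + 1) - (∑ i ∈ range (k + 1), a i) * x ^ (k + 1) := by
        rw [sub_mul, ← pow_succ, mul_assoc, ← pow_succ]
      linarith [h1, he.symm.le, he.le]
    calc x ^ (k + 1 + 1) - (∑ i ∈ range (k + 1), a i + a (k + 1)) * x ^ (k + 1)
        = (x ^ (k + 1 + 1) - (∑ i ∈ range (k + 1), a i) * x ^ (k + 1))
            - a (k + 1) * x ^ (k + 1) := by ring
      _ ≤ (∏ i ∈ range (k + 1), (x - a i)) * x -
            (∏ i ∈ range (k + 1), (x - a i)) * a (k + 1) := by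
          nlinarith [h1', h2]
      _ = (∏ i ∈ range (k + 1), (x - a i)) * (x - a (k + 1)) := by ring

lemma cast_descFactorial (n m : ℕ) (h : m ≤ n) :
    (Nat.descFactorial n m : ℝ) = ∏ i ∈ range m, ((n : ℝ) - i) := by
  rw [Nat.descFactorial_eq_prod_range, Nat.cast_prod]
  apply Finset.prod_congr rfl
  intro i hi
  simp only [mem_range] at hi
  rw [Nat.cast_sub (by omega)]

/-- For every natural number `n` and every integer `m` with `2 ≤ m ≤ n`,
`C(2n, m) − 2^m C(n, m) ≤ (2n)^m / m! − 2^m C(n, m) ≤ (2n)^{m−1} / (m−2)!`. -/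
theorem binom_double_bound (n m : ℕ) (h2 : 2 ≤ m) (hmn : m ≤ n) :
    ((Nat.choose (2 * n) m : ℝ) - 2 ^ m * (Nat.choose n m : ℝ) ≤
        (2 * (n : ℝ)) ^ m / (Nat.factorial m : ℝ) - 2 ^ m * (Nat.choose n m : ℝ)) ∧
      (2 * (n : ℝ)) ^ m / (Nat.factorial m : ℝ) - 2 ^ m * (Nat.choose n m : ℝ) ≤
        (2 * (n : ℝ)) ^ (m - 1) / (Nat.factorial (m - 2) : ℝ) := by
  have hfacpos : (0:ℝ) < (Nat.factorial m : ℝ) := by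
    exact_mod_cast Nat.factorial_pos m
  constructor
  · -- first inequality: C(2n, m) ≤ (2n)^m / m!
    apply sub_le_sub_right
    rw [le_div_iff₀ hfacpos]
    have h1 : Nat.factorial m * Nat.choose (2 * n) m ≤ (2 * n) ^ m := by
      rw [← Nat.descFactorial_eq_factorial_mul_choose]
      exact Nat.descFactorial_le_pow _ _
    calc (Nat.choose (2 * n) m : ℝ) * (Nat.factorial m : ℝ)
        = ((Nat.factorial m * Nat.choose (2 * n) m : ℕ) : ℝ) := by push_cast; ring
      _ ≤ (((2 * n) ^ m : ℕ) : ℝ) := by exact_mod_cast h1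
      _ = (2 * (n:ℝ)) ^ m := by push_cast; ring
  · -- second inequality
    obtain ⟨k, rfl⟩ : ∃ k, m = k + 1 := ⟨m - 1, by omega⟩
    set x : ℝ := 2 * (n : ℝ) with hx
    have key := prod_sub_lower x (fun i => 2 * (i:ℝ)) k
      (by intro i hi
          have hin : (i:ℝ) ≤ (n:ℝ) := by exact_mod_cast (by omega : i ≤ n)
          refine ⟨by positivity, ?_⟩
          show 2 * (i:ℝ) ≤ 2 * (n:ℝ)
          linarith)
    -- product equals 2^m * m! * choose
    have hprod : ∏ i ∈ range (k + 1), (x - 2 * (i:ℝ)) =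
        2 ^ (k + 1) * ((Nat.factorial (k + 1) : ℝ) * (Nat.choose n (k + 1) : ℝ)) := by
      have h1 : ∏ i ∈ range (k + 1), (x - 2 * (i:ℝ)) =
          ∏ i ∈ range (k + 1), (2 * ((n:ℝ) - i)) := by
        apply Finset.prod_congr rfl; intro i _; rw [hx]; ring
      rw [h1, Finset.prod_mul_distrib, Finset.prod_const, card_range,
        ← cast_descFactorial n (k + 1) hmn]
      rw [Nat.descFactorial_eq_factorial_mul_choose]
      push_cast; ring
    -- sum equals (k+1)*k
    have hsum : (∑ i ∈ range (k + 1), 2 * (i:ℝ)) = (k + 1) * k := by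
      have h := Finset.sum_range_id_mul_two (k + 1)
      simp only [Nat.add_sub_cancel] at h
      have h' := congrArg (Nat.cast : ℕ → ℝ) h
      push_cast at h'
      rw [← Finset.mul_sum]
      linarith
    rw [hprod, hsum] at key
    -- rewrite factorials
    have hkk : k + 1 - 1 = k := by omega
    have hk2 : k + 1 - 2 = k - 1 := by omega
    rw [hkk, hk2]
    have hfac : (Nat.factorial (k + 1) : ℝ) = (k + 1) * k * (Nat.factorial (k - 1) : ℝ) := by
      obtain ⟨j, rfl⟩ : ∃ j, k = j + 1 := ⟨k - 1, by omega⟩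
      simp only [Nat.factorial_succ, Nat.add_sub_cancel]
      push_cast; ring
    have hfac2pos : (0:ℝ) < (Nat.factorial (k - 1) : ℝ) := by
      exact_mod_cast Nat.factorial_pos _
    rw [div_sub' hfacpos.ne', div_le_div_iff₀ hfacpos hfac2pos, hfac]
    have key2 := mul_le_mul_of_nonneg_right key hfac2pos.le
    rw [hfac] at key2
    nlinarith [key2]
end

section
/- For every natural number n and every integer m with 2 ≤ m ≤ n, one has n^m / m! − C(n, m) ≤ n^{m−1} / (2 (m−2)!), where C(n, m) denotes the binomial coefficient. -/
lemma key_desc_bound (n : ℕ) : ∀ m : ℕ, m ≤ n →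
    (n : ℝ) ^ m ≤ (Nat.descFactorial n m : ℝ) + ((m : ℝ) * ((m : ℝ) - 1) / 2) * (n : ℝ) ^ (m - 1) := by
  intro m
  induction m with
  | zero => simp
  | succ m ih =>
    intro h
    have hm : m ≤ n := Nat.le_of_succ_le h
    have ihm := ih hm
    have hD : (Nat.descFactorial n m : ℝ) ≤ (n : ℝ) ^ m := by
      exact_mod_cast Nat.cast_le.mpr (Nat.descFactorial_le_pow n m)
    have hstep : Nat.descFactorial n (m + 1) = (n - m) * Nat.descFactorial n m :=
      Nat.descFactorial_succ n m
    have hcast : ((n - m : ℕ) : ℝ) = (n : ℝ) - (m : ℝ) := by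
      rw [Nat.cast_sub hm]
    rcases m with _ | j
    · simp [Nat.descFactorial]
    · have hn0 : (0 : ℝ) ≤ (n : ℝ) := by positivity
      have hDpos : (0 : ℝ) ≤ (Nat.descFactorial n (j+1) : ℝ) := by positivity
      simp only [Nat.add_sub_cancel] at ihm ⊢
      rw [hstep]
      push_cast [hcast]
      rw [pow_succ (n:ℝ) (j+1)] at *
      rw [pow_succ (n:ℝ) j] at *
      have e1 := mul_le_mul_of_nonneg_right ihm hn0
      have e3 : (0:ℝ) ≤ ((j:ℝ)+1) * ((n:ℝ)^j * (n:ℝ) - (Nat.descFactorial n (j+1) : ℝ)) := by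
        apply mul_nonneg (by positivity)
        linarith
      push_cast at e1 e3 ihm hD ⊢
      nlinarith [e1, e3]

/-- For every natural number `n` and every integer `m` with `2 ≤ m ≤ n`,
`n^m / m! − C(n, m) ≤ n^{m−1} / (2 (m−2)!)`. -/
theorem binom_single_bound (n m : ℕ) (h2 : 2 ≤ m) (hmn : m ≤ n) :
    (n : ℝ) ^ m / (Nat.factorial m : ℝ) - (Nat.choose n m : ℝ) ≤
      (n : ℝ) ^ (m - 1) / (2 * (Nat.factorial (m - 2) : ℝ)) := by
  obtain ⟨k, rfl⟩ := Nat.exists_eq_add_of_le h2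
  have hkey := key_desc_bound n (2 + k) hmn
  have hchoose : (Nat.descFactorial n (2 + k) : ℝ) = (Nat.factorial (2 + k) : ℝ) * (Nat.choose n (2 + k) : ℝ) := by
    exact_mod_cast congrArg (Nat.cast (R := ℝ)) (Nat.descFactorial_eq_factorial_mul_choose n (2 + k))
  have h1 : (2 + k) - 1 = k + 1 := by omega
  have h2' : (2 + k) - 2 = k := by omega
  rw [h1, h2']
  have hfac : (Nat.factorial (2 + k) : ℝ) = ((2 + k : ℕ) : ℝ) * ((1 + k : ℕ) : ℝ) * (Nat.factorial k : ℝ) := by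
    have : Nat.factorial (2 + k) = (2 + k) * ((1 + k) * Nat.factorial k) := by
      rw [show 2 + k = (1 + k) + 1 by omega, Nat.factorial_succ,
        show 1 + k = k + 1 by omega, Nat.factorial_succ]
      try ring
    rw [this]; push_cast; try ring
  have hfpos : (0 : ℝ) < (Nat.factorial (2 + k) : ℝ) := by
    exact_mod_cast Nat.factorial_pos (2 + k)
  have hkpos : (0 : ℝ) < (Nat.factorial k : ℝ) := by exact_mod_cast Nat.factorial_pos k
  rw [div_sub' (ne_of_gt hfpos), div_le_div_iff₀ hfpos (by positivity)]
  rw [hchoose] at hkey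
  have h1' : (2 + k) - 1 = k + 1 := h1
  rw [h1'] at hkey
  have : (n : ℝ) ^ (2 + k) - Nat.factorial (2 + k) * Nat.choose n (2 + k) ≤
      (((2 + k : ℕ) : ℝ) * (((2 + k : ℕ) : ℝ) - 1) / 2) * (n : ℝ) ^ (k + 1) := by
    linarith
  calc ((n : ℝ) ^ (2 + k) - Nat.factorial (2 + k) * Nat.choose n (2 + k)) * (2 * Nat.factorial k)
      ≤ ((((2 + k : ℕ) : ℝ) * (((2 + k : ℕ) : ℝ) - 1) / 2) * (n : ℝ) ^ (k + 1)) * (2 * Nat.factorial k) := by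
        apply mul_le_mul_of_nonneg_right this (by positivity)
    _ = (n : ℝ) ^ (k + 1) * Nat.factorial (2 + k) := by
        rw [hfac]; push_cast; ring
end
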